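/- arXiv:2105.07487 — 7 statements merged into one kernel-verified Lean document; each statement's English description precedes it below -/
import Mathlib

section
/- Let F : ℂ⁴ → ℂ be holomorphic on the forward tube T. For each real 4×4 matrix R with Rᵀ R = 1 and det R = 1 (i.e., R ∈ SO(4)), define ρ_R : ℂ⁴ → ℂ⁴ by: given z = (z₀,z₁,z₂,z₃), set x := (z₁, z₂, z₃, i z₀) ∈ ℂ⁴, w := R x (R acting ℂ-linearly), and ρ_R(z) := (−i w₄, w₁, w₂, w₃). Assume that for every R ∈ SO(4) and every z ∈ T with ρ_R(z) ∈ T one has F(ρ_R(z)) = F(z). Then for every complex 4×4 matrix Λ with Λᵀ G Λ = G and det Λ = 1, and every z ∈ T with Λz ∈ T (Λ acting ℂ-linearly), one has F(Λz) = F(z). -/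
open Complex Matrix

/-- The forward tube `T = {z ∈ ℂ⁴ : −Im z₀ > √((Im z₁)² + (Im z₂)² + (Im z₃)²)}`. -/
def ForwardTube : Set (Fin 4 → ℂ) :=
  {z | Real.sqrt ((z 1).im ^ 2 + (z 2).im ^ 2 + (z 3).im ^ 2) < -(z 0).im}

/-- The Minkowski metric `G = diag(1,−1,−1,−1)` over `ℂ`. -/
def minkGC : Matrix (Fin 4) (Fin 4) ℂ := Matrix.diagonal ![1, -1, -1, -1]

/-- Action of a Euclidean rotation `R ∈ SO(4)` on a point `z` of the tube, via the
Euclidean coordinates `x = (z₁, z₂, z₃, i z₀)`: `ρ_R(z) = (−i(Rx)₄, (Rx)₁, (Rx)₂, (Rx)₃)`. -/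
noncomputable def euclRotAct (R : Matrix (Fin 4) (Fin 4) ℝ) (z : Fin 4 → ℂ) : Fin 4 → ℂ :=
  let x : Fin 4 → ℂ := ![z 1, z 2, z 3, Complex.I * z 0]
  let w : Fin 4 → ℂ := fun i => ∑ j, (R i j : ℂ) * x j
  ![-Complex.I * w 3, w 0, w 1, w 2]

set_option linter.unreachableTactic false
set_option linter.unusedTactic false

lemma isOpen_forwardTube : IsOpen ForwardTube := by
  apply isOpen_lt (f := fun z : Fin 4 → ℂ =>
    Real.sqrt ((z 1).im ^ 2 + (z 2).im ^ 2 + (z 3).im ^ 2)) (g := fun z => -(z 0).im)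
  · fun_prop
  · fun_prop

noncomputable def boostC (w : ℂ) (z : Fin 4 → ℂ) : Fin 4 → ℂ :=
  ![Complex.cosh w * z 0 + Complex.sinh w * z 3, z 1, z 2,
    Complex.sinh w * z 0 + Complex.cosh w * z 3]

lemma boostC_add (w w' : ℂ) (z : Fin 4 → ℂ) :
    boostC w (boostC w' z) = boostC (w + w') z := by
  funext i
  fin_cases i <;>
    simp [boostC, Complex.cosh_add, Complex.sinh_add] <;> ring

lemma boostC_zero (z : Fin 4 → ℂ) : boostC 0 z = z := by
  funext i; fin_cases i <;> simp [boostC]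

def matE (c s : ℝ) : Matrix (Fin 4) (Fin 4) ℝ :=
  !![1,0,0,0; 0,1,0,0; 0,0,c,-s; 0,0,s,c]

lemma matE_trans (c s : ℝ) : (matE c s)ᵀ = matE c (-s) := by
  ext i j; fin_cases i <;> fin_cases j <;> simp [matE, Matrix.vecHead, Matrix.vecTail]

lemma matE_orth (c s : ℝ) (h : c^2 + s^2 = 1) : (matE c s)ᵀ * matE c s = 1 := by
  rw [matE_trans]
  ext i j
  fin_cases i <;> fin_cases j <;>
    simp [matE, Matrix.mul_apply, Fin.sum_univ_four, Matrix.one_apply, Matrix.vecHead, Matrix.vecTail] <;> nlinarith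

lemma matE_det (c s : ℝ) (h : c^2 + s^2 = 1) : (matE c s).det = 1 := by
  simp [matE, Matrix.det_succ_row_zero, Fin.sum_univ_succ, Matrix.vecHead, Matrix.vecTail,
    Fin.succAbove, Matrix.det_fin_two]
  nlinarith

lemma matE_act (α : ℝ) (z : Fin 4 → ℂ) :
    euclRotAct (matE (Real.cos α) (Real.sin α)) z = boostC (-(α : ℂ) * Complex.I) z := by
  funext i
  fin_cases i
  all_goals
    simp [euclRotAct, matE, boostC, Fin.sum_univ_four, neg_mul, Complex.cosh_neg,
      Complex.sinh_neg, Complex.cosh_mul_I, Complex.sinh_mul_I,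
      ← Complex.ofReal_cos, ← Complex.ofReal_sin]
  all_goals ring_nf
  all_goals simp [Complex.I_sq]
  all_goals try ring
def mat12 (c s : ℝ) : Matrix (Fin 4) (Fin 4) ℝ :=
  !![c,-s,0,0; s,c,0,0; 0,0,1,0; 0,0,0,1]

def mat13 (c s : ℝ) : Matrix (Fin 4) (Fin 4) ℝ :=
  !![c,0,-s,0; 0,1,0,0; s,0,c,0; 0,0,0,1]

noncomputable def rot12 (c s : ℝ) (z : Fin 4 → ℂ) : Fin 4 → ℂ :=
  ![z 0, c * z 1 - s * z 2, s * z 1 + c * z 2, z 3]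

noncomputable def rot13 (c s : ℝ) (z : Fin 4 → ℂ) : Fin 4 → ℂ :=
  ![z 0, c * z 1 - s * z 3, z 2, s * z 1 + c * z 3]

lemma mat12_trans (c s : ℝ) : (mat12 c s)ᵀ = mat12 c (-s) := by
  ext i j; fin_cases i <;> fin_cases j <;> simp [mat12, Matrix.vecHead, Matrix.vecTail]

lemma mat12_orth (c s : ℝ) (h : c^2 + s^2 = 1) : (mat12 c s)ᵀ * mat12 c s = 1 := by
  rw [mat12_trans]
  ext i j
  fin_cases i <;> fin_cases j <;>
    simp [mat12, Matrix.mul_apply, Fin.sum_univ_four, Matrix.one_apply,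
      Matrix.vecHead, Matrix.vecTail] <;> nlinarith

lemma mat12_det (c s : ℝ) (h : c^2 + s^2 = 1) : (mat12 c s).det = 1 := by
  simp [mat12, Matrix.det_succ_row_zero, Fin.sum_univ_succ, Matrix.vecHead, Matrix.vecTail,
    Fin.succAbove, Matrix.det_fin_two]
  nlinarith

lemma mat12_act (c s : ℝ) (z : Fin 4 → ℂ) :
    euclRotAct (mat12 c s) z = rot12 c s z := by
  funext i
  fin_cases i
  all_goals simp [euclRotAct, mat12, rot12, Fin.sum_univ_four]
  all_goals ring_nf
  all_goals try simp [Complex.I_sq]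
  all_goals try ring

lemma mat13_trans (c s : ℝ) : (mat13 c s)ᵀ = mat13 c (-s) := by
  ext i j; fin_cases i <;> fin_cases j <;> simp [mat13, Matrix.vecHead, Matrix.vecTail]

lemma mat13_orth (c s : ℝ) (h : c^2 + s^2 = 1) : (mat13 c s)ᵀ * mat13 c s = 1 := by
  rw [mat13_trans]
  ext i j
  fin_cases i <;> fin_cases j <;>
    simp [mat13, Matrix.mul_apply, Fin.sum_univ_four, Matrix.one_apply,
      Matrix.vecHead, Matrix.vecTail] <;> nlinarith

lemma mat13_det (c s : ℝ) (h : c^2 + s^2 = 1) : (mat13 c s).det = 1 := by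
  simp [mat13, Matrix.det_succ_row_zero, Fin.sum_univ_succ, Matrix.vecHead, Matrix.vecTail,
    Fin.succAbove, Matrix.det_fin_two]
  nlinarith

lemma mat13_act (c s : ℝ) (z : Fin 4 → ℂ) :
    euclRotAct (mat13 c s) z = rot13 c s z := by
  funext i
  fin_cases i
  all_goals simp [euclRotAct, mat13, rot13, Fin.sum_univ_four]
  all_goals ring_nf
  all_goals try simp [Complex.I_sq]
  all_goals try ring

lemma rot12_mem (c s : ℝ) (h : c^2 + s^2 = 1) (z : Fin 4 → ℂ) (hz : z ∈ ForwardTube) :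
    rot12 c s z ∈ ForwardTube := by
  have key : ((rot12 c s z) 1).im ^ 2 + ((rot12 c s z) 2).im ^ 2 + ((rot12 c s z) 3).im ^ 2
      = (z 1).im ^ 2 + (z 2).im ^ 2 + (z 3).im ^ 2 := by
    simp [rot12]
    nlinarith [h]
  show Real.sqrt _ < _
  rw [key]
  have h0 : ((rot12 c s z) 0) = z 0 := by simp [rot12]
  rw [h0]
  exact hz

lemma rot13_mem (c s : ℝ) (h : c^2 + s^2 = 1) (z : Fin 4 → ℂ) (hz : z ∈ ForwardTube) :
    rot13 c s z ∈ ForwardTube := by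
  have key : ((rot13 c s z) 1).im ^ 2 + ((rot13 c s z) 2).im ^ 2 + ((rot13 c s z) 3).im ^ 2
      = (z 1).im ^ 2 + (z 2).im ^ 2 + (z 3).im ^ 2 := by
    simp [rot13]
    nlinarith [h]
  show Real.sqrt _ < _
  rw [key]
  have h0 : ((rot13 c s z) 0) = z 0 := by simp [rot13]
  rw [h0]
  exact hz

lemma eq_of_locally_const {f : ℂ → ℂ} {S : Set ℂ} (hS : IsPreconnected S)
    (hloc : ∀ u ∈ S, ∀ᶠ v in nhds u, f v = f u) {u₀ u₁ : ℂ} (h0 : u₀ ∈ S) (h1 : u₁ ∈ S) :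
    f u₁ = f u₀ := by
  set U : Set ℂ := {v | ∀ᶠ w in nhds v, f w = f u₀} with hU
  set V : Set ℂ := {v | ∀ᶠ w in nhds v, f w ≠ f u₀} with hV
  have hUo : IsOpen U := by
    rw [hU]; exact isOpen_setOf_eventually_nhds
  have hVo : IsOpen V := by
    rw [hV]; exact isOpen_setOf_eventually_nhds
  have hdisj : Disjoint U V := by
    rw [Set.disjoint_left]
    intro v hv hv'
    obtain ⟨w, hw1, hw2⟩ := (hv.and hv').exists
    exact hw2 hw1
  have hcover : S ⊆ U ∪ V := by
    intro v hv
    by_cases hfv : f v = f u₀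
    · exact Or.inl ((hloc v hv).mono fun w hw => hw.trans hfv)
    · exact Or.inr ((hloc v hv).mono fun w hw => hw ▸ hfv)
  have hne : (S ∩ U).Nonempty := ⟨u₀, h0, hloc u₀ h0⟩
  have := hS.subset_left_of_subset_union hUo hVo hdisj hcover hne
  exact (this h1).self_of_nhds

lemma engine {F : (Fin 4 → ℂ) → ℂ} (hF : ∀ z ∈ ForwardTube, DifferentiableAt ℂ F z)
    (hinv : ∀ R : Matrix (Fin 4) (Fin 4) ℝ, Rᵀ * R = 1 → R.det = 1 →
      ∀ z ∈ ForwardTube, euclRotAct R z ∈ ForwardTube → F (euclRotAct R z) = F z)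
    (q : Fin 4 → ℂ) {S : Set ℂ} (hS : IsPreconnected S)
    (hmem : ∀ w ∈ S, boostC w q ∈ ForwardTube) {w₀ w₁ : ℂ} (h0 : w₀ ∈ S) (h1 : w₁ ∈ S) :
    F (boostC w₁ q) = F (boostC w₀ q) := by
  have hcont : Continuous fun w : ℂ => boostC w q := by
    apply continuous_pi; intro i; fin_cases i <;> simp [boostC] <;> fun_prop
  set W := {w : ℂ | boostC w q ∈ ForwardTube} with hWdef
  have hWo : IsOpen W := isOpen_forwardTube.preimage hcont
  set g := fun w => F (boostC w q) with hgdef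
  have hdiff : ∀ w ∈ W, DifferentiableAt ℂ g w := by
    intro w hw
    have h1 : DifferentiableAt ℂ (fun w : ℂ => boostC w q) w := by
      apply differentiableAt_pi.mpr; intro i; fin_cases i <;> simp [boostC] <;> fun_prop
    exact (hF _ hw).comp w h1
  have hderiv : ∀ w ∈ W, deriv g w = 0 := by
    intro w hw
    have hca : ContinuousAt (fun α : ℝ => w + -(α : ℂ) * Complex.I) 0 := by fun_prop
    have hw0 : w + -((0:ℝ) : ℂ) * Complex.I = w := by simp
    have hmem' : ∀ᶠ α : ℝ in nhds 0, (w + -(α:ℂ) * Complex.I) ∈ W := by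
      have : ∀ᶠ α : ℝ in nhds 0, (fun α : ℝ => w + -(α:ℂ) * Complex.I) α ∈ W := by
        apply hca.eventually_mem
        rw [hw0]
        exact hWo.mem_nhds hw
      exact this
    have heq : (fun α : ℝ => g (w + -(α:ℂ) * Complex.I)) =ᶠ[nhds 0] fun _ => g w := by
      filter_upwards [hmem'] with α hα
      have horth := matE_orth (Real.cos α) (Real.sin α) (by nlinarith [Real.sin_sq_add_cos_sq α])
      have hdet := matE_det (Real.cos α) (Real.sin α) (by nlinarith [Real.sin_sq_add_cos_sq α])
      have key := hinv _ horth hdet (boostC w q) hw (by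
        rw [matE_act, boostC_add]
        rw [hWdef] at hα
        simpa [add_comm] using hα)
      rw [matE_act, boostC_add] at key
      simpa [add_comm, hgdef] using key
    have hL : HasDerivAt (fun α : ℝ => w + -(α:ℂ) * Complex.I) (-Complex.I) 0 := by
      have h1 : HasDerivAt (fun α : ℝ => -(α:ℂ)) (-1 : ℂ) 0 :=
        (Complex.ofRealCLM.hasDerivAt (x := (0:ℝ))).neg
      simpa using (h1.mul_const Complex.I).const_add w
    have hg' : HasDerivAt g (deriv g w) w := (hdiff w hw).hasDerivAt
    have hcomp : HasDerivAt (fun α : ℝ => g (w + -(α:ℂ) * Complex.I))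
        ((-Complex.I) • deriv g w) 0 :=
      HasDerivAt.scomp_of_eq (0:ℝ) hg' hL hw0.symm
    have hzero : HasDerivAt (fun α : ℝ => g (w + -(α:ℂ) * Complex.I)) 0 0 :=
      (hasDerivAt_const (0:ℝ) (g w)).congr_of_eventuallyEq heq
    have huniq := hcomp.unique hzero
    rcases smul_eq_zero.mp huniq with h | h
    · exact absurd (neg_eq_zero.mp h) Complex.I_ne_zero
    · exact h
  have hloc : ∀ w ∈ S, ∀ᶠ v in nhds w, g v = g w := by
    intro w hw
    obtain ⟨ε, hε, hball⟩ := Metric.isOpen_iff.mp hWo w (hmem w hw)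
    have hconst : ∀ v ∈ Metric.ball w ε, g v = g w := by
      intro v hv
      apply (convex_ball w ε).is_const_of_fderivWithin_eq_zero (𝕜 := ℂ)
        (fun x hx => (hdiff x (hball hx)).differentiableWithinAt)
        ?_ hv (Metric.mem_ball_self hε)
      intro x hx
      have hd : HasDerivAt g 0 x := by
        have := (hdiff x (hball hx)).hasDerivAt
        rwa [hderiv x (hball hx)] at this
      rw [fderivWithin_eq_fderiv (Metric.isOpen_ball.uniqueDiffOn x hx) (hdiff x (hball hx))]
      apply ContinuousLinearMap.ext_ring
      rw [fderiv_apply_one_eq_deriv, hderiv x (hball hx)]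
      simp
    filter_upwards [Metric.ball_mem_nhds w hε] with v hv
    exact hconst v hv
  exact eq_of_locally_const hS hloc h0 h1

noncomputable def mdot (z : Fin 4 → ℂ) : ℂ := z 0^2 - z 1^2 - z 2^2 - z 3^2

lemma ofReal_sq_add {c s : ℝ} (h : c^2 + s^2 = 1) : ((c:ℂ))^2 + ((s:ℂ))^2 = 1 := by
  exact_mod_cast congrArg (fun x : ℝ => (x:ℂ)) h

lemma mdot_rot12 (c s : ℝ) (h : c^2 + s^2 = 1) (z : Fin 4 → ℂ) :
    mdot (rot12 c s z) = mdot z := by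
  have h' := ofReal_sq_add h
  simp only [mdot, rot12]
  simp only [Matrix.cons_val_zero, Matrix.cons_val_one, Matrix.head_cons,
    Matrix.cons_val_two, Matrix.tail_cons, Matrix.cons_val_three]
  linear_combination (-(z 1)^2 - (z 2)^2) * h'

lemma mdot_rot13 (c s : ℝ) (h : c^2 + s^2 = 1) (z : Fin 4 → ℂ) :
    mdot (rot13 c s z) = mdot z := by
  have h' := ofReal_sq_add h
  simp only [mdot, rot13]
  simp only [Matrix.cons_val_zero, Matrix.cons_val_one, Matrix.head_cons,
    Matrix.cons_val_two, Matrix.tail_cons, Matrix.cons_val_three]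
  linear_combination (-(z 1)^2 - (z 3)^2) * h'

lemma mdot_boostC (w : ℂ) (z : Fin 4 → ℂ) : mdot (boostC w z) = mdot z := by
  simp only [mdot, boostC]
  simp only [Matrix.cons_val_zero, Matrix.cons_val_one, Matrix.head_cons,
    Matrix.cons_val_two, Matrix.tail_cons, Matrix.cons_val_three]
  linear_combination ((z 0)^2 - (z 3)^2) * (Complex.cosh_sq_sub_sinh_sq w)

lemma boost_mem_real (z : Fin 4 → ℂ) (h1 : (z 1).im = 0) (h2 : (z 2).im = 0)
    (hz : z ∈ ForwardTube) (τ : ℝ) : boostC (τ:ℂ) z ∈ ForwardTube := by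
  have hz' : Real.sqrt ((z 1).im^2 + (z 2).im^2 + (z 3).im^2) < -(z 0).im := hz
  rw [h1, h2] at hz'
  have habs : |(z 3).im| < -(z 0).im := by
    rwa [show (0:ℝ)^2 + 0^2 + (z 3).im^2 = (z 3).im^2 by ring, Real.sqrt_sq_eq_abs] at hz'
  have hB := abs_lt.mp habs
  have him0 : ((boostC (τ:ℂ) z) 0).im = Real.cosh τ * (z 0).im + Real.sinh τ * (z 3).im := by
    simp [boostC, ← Complex.ofReal_cosh, ← Complex.ofReal_sinh]
  have him1 : ((boostC (τ:ℂ) z) 1).im = 0 := by simp [boostC, h1]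
  have him2 : ((boostC (τ:ℂ) z) 2).im = 0 := by simp [boostC, h2]
  have him3 : ((boostC (τ:ℂ) z) 3).im = Real.sinh τ * (z 0).im + Real.cosh τ * (z 3).im := by
    simp [boostC, ← Complex.ofReal_cosh, ← Complex.ofReal_sinh]
  show Real.sqrt _ < _
  rw [him0, him1, him2, him3,
    show (0:ℝ)^2 + 0^2 + (Real.sinh τ * (z 0).im + Real.cosh τ * (z 3).im)^2
      = (Real.sinh τ * (z 0).im + Real.cosh τ * (z 3).im)^2 by ring, Real.sqrt_sq_eq_abs]
  have k1 : (Real.cosh τ - Real.sinh τ) * (-(z 0).im - (z 3).im) > 0 := by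
    rw [Real.cosh_sub_sinh]
    exact mul_pos (Real.exp_pos _) (by linarith)
  have k2 : (Real.cosh τ + Real.sinh τ) * (-(z 0).im + (z 3).im) > 0 := by
    rw [Real.cosh_add_sinh]
    exact mul_pos (Real.exp_pos _) (by linarith)
  rw [abs_lt]
  constructor <;> nlinarith [k1, k2]

lemma rot12_inv {F : (Fin 4 → ℂ) → ℂ}
    (hinv : ∀ R : Matrix (Fin 4) (Fin 4) ℝ, Rᵀ * R = 1 → R.det = 1 →
      ∀ z ∈ ForwardTube, euclRotAct R z ∈ ForwardTube → F (euclRotAct R z) = F z)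
    (c s : ℝ) (h : c^2 + s^2 = 1) (z : Fin 4 → ℂ) (hz : z ∈ ForwardTube) :
    F (rot12 c s z) = F z := by
  have := hinv (mat12 c s) (mat12_orth c s h) (mat12_det c s h) z hz
    (by rw [mat12_act]; exact rot12_mem c s h z hz)
  rwa [mat12_act] at this

lemma rot13_inv {F : (Fin 4 → ℂ) → ℂ}
    (hinv : ∀ R : Matrix (Fin 4) (Fin 4) ℝ, Rᵀ * R = 1 → R.det = 1 →
      ∀ z ∈ ForwardTube, euclRotAct R z ∈ ForwardTube → F (euclRotAct R z) = F z)
    (c s : ℝ) (h : c^2 + s^2 = 1) (z : Fin 4 → ℂ) (hz : z ∈ ForwardTube) :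
    F (rot13 c s z) = F z := by
  have := hinv (mat13 c s) (mat13_orth c s h) (mat13_det c s h) z hz
    (by rw [mat13_act]; exact rot13_mem c s h z hz)
  rwa [mat13_act] at this

/-- rotation coefficients sending the (real) pair (a,b) to (√(a²+b²), 0) via
`(c*a - s*b, s*a + c*b)`. -/
noncomputable def rcoef (a b : ℝ) : ℝ × ℝ :=
  if Real.sqrt (a^2+b^2) = 0 then (1, 0) else (a / Real.sqrt (a^2+b^2), -b / Real.sqrt (a^2+b^2))

lemma rcoef_spec (a b : ℝ) :
    (rcoef a b).1 ^ 2 + (rcoef a b).2 ^ 2 = 1 ∧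
    (rcoef a b).1 * a - (rcoef a b).2 * b = Real.sqrt (a^2+b^2) ∧
    (rcoef a b).2 * a + (rcoef a b).1 * b = 0 := by
  set ρ := Real.sqrt (a^2+b^2) with hρ
  have hρsq : ρ^2 = a^2 + b^2 := Real.sq_sqrt (by positivity)
  by_cases h : ρ = 0
  · have ha : a = 0 := by nlinarith
    have hb : b = 0 := by nlinarith
    simp [rcoef, ← hρ, h, ha, hb]
  · have hρpos : ρ > 0 := lt_of_le_of_ne (Real.sqrt_nonneg _) (Ne.symm h)
    simp only [rcoef, ← hρ, if_neg h]
    refine ⟨by field_simp; linarith [hρsq], by field_simp; linarith [hρsq], by ring⟩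

/-- rotation coefficients sending the (real) pair (a,b) to (0, √(a²+b²)). -/
noncomputable def rcoef' (a b : ℝ) : ℝ × ℝ :=
  if Real.sqrt (a^2+b^2) = 0 then (1, 0) else (b / Real.sqrt (a^2+b^2), a / Real.sqrt (a^2+b^2))

lemma rcoef'_spec (a b : ℝ) :
    (rcoef' a b).1 ^ 2 + (rcoef' a b).2 ^ 2 = 1 ∧
    (rcoef' a b).1 * a - (rcoef' a b).2 * b = 0 ∧
    (rcoef' a b).2 * a + (rcoef' a b).1 * b = Real.sqrt (a^2+b^2) := by
  set ρ := Real.sqrt (a^2+b^2) with hρ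
  have hρsq : ρ^2 = a^2 + b^2 := Real.sq_sqrt (by positivity)
  by_cases h : ρ = 0
  · have ha : a = 0 := by nlinarith
    have hb : b = 0 := by nlinarith
    simp [rcoef', ← hρ, h, ha, hb]
  · have hρpos : ρ > 0 := lt_of_le_of_ne (Real.sqrt_nonneg _) (Ne.symm h)
    simp only [rcoef', ← hρ, if_neg h]
    refine ⟨by field_simp; linarith [hρsq], by ring, by field_simp; linarith [hρsq]⟩

set_option maxHeartbeats 2000000 in
lemma reduce {F : (Fin 4 → ℂ) → ℂ} (hF : ∀ z ∈ ForwardTube, DifferentiableAt ℂ F z)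
    (hinv : ∀ R : Matrix (Fin 4) (Fin 4) ℝ, Rᵀ * R = 1 → R.det = 1 →
      ∀ z ∈ ForwardTube, euclRotAct R z ∈ ForwardTube → F (euclRotAct R z) = F z)
    (z : Fin 4 → ℂ) (hz : z ∈ ForwardTube) :
    ∃ z' : Fin 4 → ℂ, z' 1 = 0 ∧ z' 2 = 0 ∧ (z' 3).im = 0 ∧ (z' 0).im < 0 ∧
      mdot z' = mdot z ∧ F z' = F z := by
  classical
  -- notation for imaginary parts
  set a0 := (z 0).im with ha0
  set a1 := (z 1).im
  set a2 := (z 2).im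
  set a3 := (z 3).im
  have hz' : Real.sqrt (a1^2 + a2^2 + a3^2) < -a0 := hz
  -- Step A : rotate in the (1,2)-plane to kill Im z₂
  obtain ⟨hA1, hA2, hA3⟩ := rcoef_spec a1 a2
  set c1 := (rcoef a1 a2).1
  set s1 := (rcoef a1 a2).2
  set ρ := Real.sqrt (a1^2 + a2^2) with hρdef
  set zA := rot12 c1 s1 z with hzA
  have hzAmem : zA ∈ ForwardTube := rot12_mem c1 s1 hA1 z hz
  have hFA : F zA = F z := rot12_inv hinv c1 s1 hA1 z hz
  have hzA0 : zA 0 = z 0 := by simp [hzA, rot12]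
  have hzA3 : zA 3 = z 3 := by simp [hzA, rot12]
  have hzA1im : (zA 1).im = ρ := by
    simp [hzA, rot12]; rw [← hA2]
  have hzA2im : (zA 2).im = 0 := by
    simp [hzA, rot12]; rw [← hA3]
  -- Step B : rotate in the (1,3)-plane to kill Im z₁
  obtain ⟨hB1, hB2, hB3⟩ := rcoef'_spec ρ a3
  set c2 := (rcoef' ρ a3).1
  set s2 := (rcoef' ρ a3).2
  set r := Real.sqrt (ρ^2 + a3^2) with hrdef
  set zB := rot13 c2 s2 zA with hzB
  have hzBmem : zB ∈ ForwardTube := rot13_mem c2 s2 hB1 zA hzAmem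
  have hFB : F zB = F zA := rot13_inv hinv c2 s2 hB1 zA hzAmem
  have hzB0 : zB 0 = z 0 := by rw [hzB]; simp [rot13]; exact hzA0
  have hzB2im : (zB 2).im = 0 := by rw [hzB]; simp [rot13]; exact hzA2im
  have hzB1im : (zB 1).im = 0 := by
    rw [hzB]; simp [rot13, hzA1im, hzA3]; rw [← hB2]
  have hzB3im : (zB 3).im = r := by
    rw [hzB]; simp [rot13, hzA1im, hzA3]; rw [← hB3]
  -- relation between r and the original square root
  have hr_eq : r = Real.sqrt (a1^2 + a2^2 + a3^2) := by
    rw [hrdef, hρdef, Real.sq_sqrt (by positivity : a1^2+a2^2 ≥ 0)]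
  have hr_lt : r < -a0 := by rw [hr_eq]; exact hz'
  have hr_nonneg : 0 ≤ r := Real.sqrt_nonneg _
  have ha0neg : a0 < 0 := by nlinarith
  -- Step C : real boost killing Im z₃
  set A := -a0 with hAdef
  have hApos : 0 < A := by linarith
  have hArpos : 0 < A - r := by linarith
  have hArpos' : 0 < A + r := by linarith
  set t := Real.log ((A + r)/(A - r)) / 2 with htdef
  set E := Real.exp t with hEdef
  have hEpos : 0 < E := Real.exp_pos _
  have hE2 : E^2 = (A + r)/(A - r) := by
    rw [pow_two, hEdef, ← Real.exp_add,
      show t + t = Real.log ((A + r)/(A - r)) by rw [htdef]; ring]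
    exact Real.exp_log (by positivity)
  set zC := boostC (t:ℂ) zB with hzC
  have hFC : F zC = F zB := by
    have hpre : IsPreconnected (Set.range (fun τ : ℝ => (τ:ℂ))) :=
      isPreconnected_range Complex.continuous_ofReal
    have hmem : ∀ w ∈ Set.range (fun τ : ℝ => (τ:ℂ)), boostC w zB ∈ ForwardTube := by
      rintro w ⟨τ, rfl⟩
      exact boost_mem_real zB hzB1im hzB2im hzBmem τ
    have := engine hF hinv zB hpre hmem (w₀ := ((0:ℝ):ℂ)) (w₁ := (t:ℂ))
      ⟨0, rfl⟩ ⟨t, rfl⟩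
    rwa [show (((0:ℝ):ℂ)) = 0 by norm_num, boostC_zero] at this
  have hzC1 : zC 1 = zB 1 := by simp [hzC, boostC]
  have hzC2 : zC 2 = zB 2 := by simp [hzC, boostC]
  have hzC0im : (zC 0).im = Real.cosh t * a0 + Real.sinh t * r := by
    simp [hzC, boostC, ← Complex.ofReal_cosh, ← Complex.ofReal_sinh, hzB0, hzB3im, ha0]
  have hzC3im : (zC 3).im = Real.sinh t * a0 + Real.cosh t * r := by
    simp [hzC, boostC, ← Complex.ofReal_cosh, ← Complex.ofReal_sinh, hzB0, hzB3im, ha0]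
  have hcosh : Real.cosh t = (E + E⁻¹)/2 := by
    rw [Real.cosh_eq, hEdef, Real.exp_neg]
  have hsinh : Real.sinh t = (E - E⁻¹)/2 := by
    rw [Real.sinh_eq, hEdef, Real.exp_neg]
  have hC3 : (zC 3).im = 0 := by
    rw [hzC3im, hsinh, hcosh]
    have : E * ((E - E⁻¹)/2 * a0 + (E + E⁻¹)/2 * r) = 0 := by
      have expand : E * ((E - E⁻¹)/2 * a0 + (E + E⁻¹)/2 * r)
          = E^2 * (a0 + r)/2 + (r - a0)/2 := by
        field_simp
        ring
      rw [expand, hE2]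
      field_simp
      rw [hAdef]
      ring
    rcases mul_eq_zero.mp this with h | h
    · exact absurd h (ne_of_gt hEpos)
    · exact h
  have hC0 : (zC 0).im < 0 := by
    rw [hzC0im, hsinh, hcosh]
    have expand : E * ((E + E⁻¹)/2 * a0 + (E - E⁻¹)/2 * r)
        = E^2 * (a0 + r)/2 + (a0 - r)/2 := by
      field_simp; ring
    have hval : E^2 * (a0 + r)/2 + (a0 - r)/2 < 0 := by
      rw [hE2]
      rw [div_mul_eq_mul_div, div_div]
      have h1 : (A + r) * (a0 + r) = -((A+r)*(A - r)) := by rw [hAdef]; ring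
      rw [h1, neg_div]
      have h2 : (A + r) * (A - r) / ((A - r) * 2) = (A + r)/2 := by
        field_simp
      rw [h2]
      linarith
    nlinarith [hEpos]
  -- Step D : rotate in (1,2) to kill Re z₂ (imaginary parts of z₁,z₂ are 0)
  have hzC1im : (zC 1).im = 0 := by rw [hzC1]; exact hzB1im
  have hzC2im : (zC 2).im = 0 := by rw [hzC2]; exact hzB2im
  set b1 := (zC 1).re
  set b2 := (zC 2).re
  obtain ⟨hD1, hD2, hD3⟩ := rcoef_spec b1 b2
  set c3 := (rcoef b1 b2).1
  set s3 := (rcoef b1 b2).2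
  set zD := rot12 c3 s3 zC with hzD
  have hzCmem : zC ∈ ForwardTube := by
    rw [hzC]; exact boost_mem_real zB hzB1im hzB2im hzBmem t
  have hFD : F zD = F zC := rot12_inv hinv c3 s3 hD1 zC hzCmem
  have hzD0 : zD 0 = zC 0 := by simp [hzD, rot12]
  have hzD3 : zD 3 = zC 3 := by simp [hzD, rot12]
  have hzD1im : (zD 1).im = 0 := by simp [hzD, rot12, hzC1im, hzC2im]
  have hzD2 : zD 2 = 0 := by
    apply Complex.ext
    · simp [hzD, rot12]; rw [← hD3]
    · simp [hzD, rot12, hzC1im, hzC2im]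
  have hzD1re : (zD 1).re = Real.sqrt (b1^2 + b2^2) := by
    simp [hzD, rot12]; rw [← hD2]
  -- Step E : rotate in (1,3) to kill Re z₁
  set b3 := (zD 3).re
  set ρ' := Real.sqrt (b1^2+b2^2) with hρ'def
  obtain ⟨hE1, hE2', hE3⟩ := rcoef'_spec ρ' b3
  set c4 := (rcoef' ρ' b3).1
  set s4 := (rcoef' ρ' b3).2
  set zE := rot13 c4 s4 zD with hzE
  have hzDmem : zD ∈ ForwardTube := rot12_mem c3 s3 hD1 zC hzCmem
  have hFE : F zE = F zD := rot13_inv hinv c4 s4 hE1 zD hzDmem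
  have hzD3im : (zD 3).im = 0 := by rw [hzD3]; exact hC3
  have hzE1 : zE 1 = 0 := by
    apply Complex.ext
    · simp [hzE, rot13, hzD1re, ← hρ'def]; rw [← hE2']
    · simp [hzE, rot13, hzD1im, hzD3im]
  have hzE2 : zE 2 = 0 := by simp [hzE, rot13]; exact hzD2
  have hzE3im : (zE 3).im = 0 := by
    simp [hzE, rot13, hzD1im, hzD3im]
  have hzE0im : (zE 0).im < 0 := by
    have : zE 0 = zD 0 := by simp [hzE, rot13]
    rw [this, hzD0]; exact hC0
  refine ⟨zE, hzE1, hzE2, hzE3im, hzE0im, ?_, ?_⟩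
  · rw [hzE, mdot_rot13 _ _ hE1, hzD, mdot_rot12 _ _ hD1, hzC, mdot_boostC,
      hzB, mdot_rot13 _ _ hB1, hzA, mdot_rot12 _ _ hA1]
  · rw [hFE, hFD, hFC, hFB, hFA]

noncomputable def Zc (c₀ u : ℂ) : Fin 4 → ℂ := ![(u + c₀/u)/2, 0, 0, (u - c₀/u)/2]

def Om (c₀ : ℂ) : Set ℂ := {u : ℂ | u.im < 0 ∧ (c₀ * (starRingEnd ℂ) u).im < 0}

lemma om_ne_zero {c₀ u : ℂ} (hu : u ∈ Om c₀) : u ≠ 0 := by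
  intro h
  rw [h] at hu
  simp [Om] at hu

lemma om_div_im {c₀ u : ℂ} (hu : u ∈ Om c₀) : (c₀ / u).im < 0 := by
  have hne := om_ne_zero hu
  have h1 : c₀ / u = (c₀ * (starRingEnd ℂ) u) * ((Complex.normSq u : ℝ) : ℂ)⁻¹ := by
    rw [div_eq_mul_inv, Complex.inv_def, mul_assoc]
    norm_num
  rw [h1, ← Complex.ofReal_inv]
  rw [Complex.mul_im]
  simp only [Complex.ofReal_re, Complex.ofReal_im, mul_zero, add_zero]
  have hpos : 0 < (Complex.normSq u)⁻¹ := by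
    rw [inv_pos]; exact Complex.normSq_pos.mpr hne
  have := hu.2
  linarith [mul_neg_of_neg_of_pos this hpos]

lemma convex_om (c₀ : ℂ) : Convex ℝ (Om c₀) := by
  have h1 : Convex ℝ {u : ℂ | u.im < 0} := convex_halfSpace_im_lt 0
  have h2 : Convex ℝ {u : ℂ | (c₀ * (starRingEnd ℂ) u).im < 0} := by
    apply convex_halfSpace_lt
    constructor
    · intro a b; simp [map_add, mul_add]
    · intro r a
      have h : c₀ * (starRingEnd ℂ) (r • a) = (r:ℂ) * (c₀ * (starRingEnd ℂ) a) := by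
        rw [Complex.real_smul, _root_.map_mul, Complex.conj_ofReal]; ring
      show (c₀ * (starRingEnd ℂ) (r • a)).im = r • (c₀ * (starRingEnd ℂ) a).im
      rw [h, Complex.mul_im]
      simp [smul_eq_mul]
  exact Convex.inter h1 h2

lemma isOpen_om (c₀ : ℂ) : IsOpen (Om c₀) := by
  apply IsOpen.inter
  · exact isOpen_lt Complex.continuous_im continuous_const
  · exact isOpen_lt (Complex.continuous_im.comp (continuous_const.mul Complex.continuous_conj)) continuous_const

lemma Zc_mem {c₀ u : ℂ} (hu : u ∈ Om c₀) : Zc c₀ u ∈ ForwardTube := by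
  have h1 : (Zc c₀ u 1).im = 0 := by simp [Zc]
  have h2 : (Zc c₀ u 2).im = 0 := by simp [Zc]
  have h0 : (Zc c₀ u 0).im = (u.im + (c₀/u).im)/2 := by simp [Zc]
  have h3 : (Zc c₀ u 3).im = (u.im - (c₀/u).im)/2 := by simp [Zc]
  show Real.sqrt _ < _
  rw [h0, h1, h2, h3]
  rw [show (0:ℝ)^2 + 0^2 + ((u.im - (c₀/u).im)/2)^2 = ((u.im - (c₀/u).im)/2)^2 by ring,
    Real.sqrt_sq_eq_abs, abs_lt]
  have hv := om_div_im hu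
  have hui := hu.1
  constructor <;> [linarith; linarith]

lemma Zc_boost {c₀ u : ℂ} (hu : u ≠ 0) (w : ℂ) :
    Zc c₀ (Complex.exp w * u) = boostC w (Zc c₀ u) := by
  have hew := Complex.exp_ne_zero w
  have hc : Complex.cosh w = (Complex.exp w + (Complex.exp w)⁻¹)/2 := by
    rw [eq_div_iff (two_ne_zero : (2:ℂ) ≠ 0), mul_comm, ← Complex.exp_neg]
    exact Complex.two_cosh w
  have hs : Complex.sinh w = (Complex.exp w - (Complex.exp w)⁻¹)/2 := by
    rw [eq_div_iff (two_ne_zero : (2:ℂ) ≠ 0), mul_comm, ← Complex.exp_neg]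
    exact Complex.two_sinh w
  funext i
  fin_cases i <;>
    simp [Zc, boostC, hc, hs] <;>
    field_simp <;> ring

lemma omega_const {F : (Fin 4 → ℂ) → ℂ} (hF : ∀ z ∈ ForwardTube, DifferentiableAt ℂ F z)
    (hinv : ∀ R : Matrix (Fin 4) (Fin 4) ℝ, Rᵀ * R = 1 → R.det = 1 →
      ∀ z ∈ ForwardTube, euclRotAct R z ∈ ForwardTube → F (euclRotAct R z) = F z)
    (c₀ : ℂ) {u u' : ℂ} (hu : u ∈ Om c₀) (hu' : u' ∈ Om c₀) :
    F (Zc c₀ u') = F (Zc c₀ u) := by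
  apply eq_of_locally_const (f := fun v => F (Zc c₀ v)) ((convex_om c₀).isPreconnected) ?_ hu hu'
  intro v hv
  -- local constancy at v ∈ Om c₀
  have hvne := om_ne_zero hv
  have hvabs : 0 < ‖v‖ := by
    exact norm_pos_iff.mpr hvne
  obtain ⟨ε, hε, hball⟩ := Metric.isOpen_iff.mp (isOpen_om c₀) v hv
  -- choose a bound for the logarithm
  set ε' : ℝ := min 1 (ε / (2 * ‖v‖ + 1)) with hε'def
  have hε'pos : 0 < ε' := by
    apply lt_min one_pos
    positivity
  -- continuity of w ↦ log (w / v) at v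
  have hcont : ContinuousAt (fun w : ℂ => Complex.log (w / v)) v := by
    have h1 : ContinuousAt (fun w : ℂ => w / v) v :=
      continuousAt_id.div continuousAt_const hvne
    have h2 : ContinuousAt Complex.log (v / v) := by
      rw [div_self hvne]
      exact continuousAt_clog Complex.one_mem_slitPlane
    exact Filter.Tendsto.comp h2 h1
  have hev : ∀ᶠ w in nhds v, ‖Complex.log (w / v)‖ < ε' := by
    have hball0 : Metric.ball (0:ℂ) ε' ∈ nhds ((fun w : ℂ => Complex.log (w / v)) v) := by
      rw [show (fun w : ℂ => Complex.log (w / v)) v = 0 by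
        simp [div_self hvne, Complex.log_one]]
      exact Metric.ball_mem_nhds _ hε'pos
    filter_upwards [hcont.eventually_mem hball0] with w hw
    simpa [Complex.dist_eq] using hw
  filter_upwards [hev, Metric.ball_mem_nhds v hε] with w hw hw2
  have hwOm : w ∈ Om c₀ := hball hw2
  have hwne := om_ne_zero hwOm
  set L := Complex.log (w / v) with hLdef
  have hexpL : Complex.exp L * v = w := by
    rw [hLdef, Complex.exp_log (div_ne_zero hwne hvne)]
    field_simp
  have hLlt : ‖L‖ < ε' := hw
  have hL1 : ‖L‖ ≤ 1 := le_trans hLlt.le (min_le_left _ _)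
  have hLε : ‖L‖ ≤ ε / (2 * ‖v‖ + 1) := le_trans hLlt.le (min_le_right _ _)
  -- all the intermediate points stay in the ball, hence in Om c₀
  have hseg : ∀ t : ℝ, t ∈ Set.Icc (0:ℝ) 1 → Complex.exp ((t:ℂ) * L) * v ∈ Om c₀ := by
    intro t ht
    apply hball
    rw [Metric.mem_ball, Complex.dist_eq]
    have h1 : Complex.exp ((t:ℂ) * L) * v - v = (Complex.exp ((t:ℂ) * L) - 1) * v := by ring
    rw [h1, norm_mul]
    have htL : ‖(t:ℂ) * L‖ ≤ ‖L‖ := by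
      rw [norm_mul, Complex.norm_real, Real.norm_eq_abs, _root_.abs_of_nonneg ht.1]
      nlinarith [norm_nonneg L, ht.2]
    have hb := Complex.norm_exp_sub_one_le (x := (t:ℂ) * L) (le_trans htL hL1)
    have : ‖Complex.exp ((t:ℂ) * L) - 1‖ ≤ 2 * ‖L‖ := by
      calc ‖Complex.exp ((t:ℂ) * L) - 1‖ ≤ 2 * ‖(t:ℂ) * L‖ := hb
      _ ≤ 2 * ‖L‖ := by linarith
    calc ‖Complex.exp ((t:ℂ) * L) - 1‖ * ‖v‖
        ≤ 2 * ‖L‖ * ‖v‖ := by nlinarith [norm_nonneg v]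
      _ ≤ 2 * (ε / (2 * ‖v‖ + 1)) * ‖v‖ := by nlinarith
      _ < ε := by
          rw [show 2 * (ε / (2 * ‖v‖ + 1)) * ‖v‖
              = (2 * ε * ‖v‖) / (2 * ‖v‖ + 1) by ring,
            div_lt_iff₀ (by positivity)]
          nlinarith
  -- apply the engine along the segment from 0 to L
  have hpre : IsPreconnected ((fun t : ℝ => (t:ℂ) * L) '' Set.Icc 0 1) :=
    (isPreconnected_Icc).image _ (Continuous.continuousOn (by fun_prop))
  have hmem : ∀ ω ∈ (fun t : ℝ => (t:ℂ) * L) '' Set.Icc 0 1,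
      boostC ω (Zc c₀ v) ∈ ForwardTube := by
    rintro ω ⟨t, ht, rfl⟩
    rw [← Zc_boost hvne]
    exact Zc_mem (hseg t ht)
  have h0mem : (0:ℂ) ∈ (fun t : ℝ => (t:ℂ) * L) '' Set.Icc 0 1 :=
    ⟨0, ⟨le_refl 0, zero_le_one⟩, by simp⟩
  have h1mem : L ∈ (fun t : ℝ => (t:ℂ) * L) '' Set.Icc 0 1 :=
    ⟨1, ⟨zero_le_one, le_refl 1⟩, by simp⟩
  have key := engine hF hinv (Zc c₀ v) hpre hmem h0mem h1mem
  rw [boostC_zero, ← Zc_boost hvne, hexpL] at key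
  exact key

lemma mdot_lorentz (Λ : Matrix (Fin 4) (Fin 4) ℂ) (hΛ : Λᵀ * minkGC * Λ = minkGC)
    (z : Fin 4 → ℂ) : mdot (fun i => ∑ j, Λ i j * z j) = mdot z := by
  have key : ∀ i j, (Λᵀ * minkGC * Λ) i j = minkGC i j := fun i j => by rw [hΛ]
  have expand : ∀ i j, (Λᵀ * minkGC * Λ) i j
      = Λ 0 i * Λ 0 j - Λ 1 i * Λ 1 j - Λ 2 i * Λ 2 j - Λ 3 i * Λ 3 j := by
    intro i j
    simp [minkGC, Matrix.mul_apply, Matrix.diagonal_apply, Fin.sum_univ_four,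
      Matrix.transpose_apply, Matrix.vecHead, Matrix.vecTail]
    ring
  have e00 : Λ 0 0 * Λ 0 0 - Λ 1 0 * Λ 1 0 - Λ 2 0 * Λ 2 0 - Λ 3 0 * Λ 3 0 = 1 := by
    have h := (expand 0 0).symm.trans (key 0 0)
    simpa [minkGC, Matrix.diagonal_apply, Matrix.vecHead, Matrix.vecTail] using h
  have e01 : Λ 0 0 * Λ 0 1 - Λ 1 0 * Λ 1 1 - Λ 2 0 * Λ 2 1 - Λ 3 0 * Λ 3 1 = 0 := by
    have h := (expand 0 1).symm.trans (key 0 1)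
    simpa [minkGC, Matrix.diagonal_apply, Matrix.vecHead, Matrix.vecTail] using h
  have e02 : Λ 0 0 * Λ 0 2 - Λ 1 0 * Λ 1 2 - Λ 2 0 * Λ 2 2 - Λ 3 0 * Λ 3 2 = 0 := by
    have h := (expand 0 2).symm.trans (key 0 2)
    simpa [minkGC, Matrix.diagonal_apply, Matrix.vecHead, Matrix.vecTail] using h
  have e03 : Λ 0 0 * Λ 0 3 - Λ 1 0 * Λ 1 3 - Λ 2 0 * Λ 2 3 - Λ 3 0 * Λ 3 3 = 0 := by
    have h := (expand 0 3).symm.trans (key 0 3)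
    simpa [minkGC, Matrix.diagonal_apply, Matrix.vecHead, Matrix.vecTail] using h
  have e10 : Λ 0 1 * Λ 0 0 - Λ 1 1 * Λ 1 0 - Λ 2 1 * Λ 2 0 - Λ 3 1 * Λ 3 0 = 0 := by
    have h := (expand 1 0).symm.trans (key 1 0)
    simpa [minkGC, Matrix.diagonal_apply, Matrix.vecHead, Matrix.vecTail] using h
  have e11 : Λ 0 1 * Λ 0 1 - Λ 1 1 * Λ 1 1 - Λ 2 1 * Λ 2 1 - Λ 3 1 * Λ 3 1 = -1 := by
    have h := (expand 1 1).symm.trans (key 1 1)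
    simpa [minkGC, Matrix.diagonal_apply, Matrix.vecHead, Matrix.vecTail] using h
  have e12 : Λ 0 1 * Λ 0 2 - Λ 1 1 * Λ 1 2 - Λ 2 1 * Λ 2 2 - Λ 3 1 * Λ 3 2 = 0 := by
    have h := (expand 1 2).symm.trans (key 1 2)
    simpa [minkGC, Matrix.diagonal_apply, Matrix.vecHead, Matrix.vecTail] using h
  have e13 : Λ 0 1 * Λ 0 3 - Λ 1 1 * Λ 1 3 - Λ 2 1 * Λ 2 3 - Λ 3 1 * Λ 3 3 = 0 := by
    have h := (expand 1 3).symm.trans (key 1 3)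
    simpa [minkGC, Matrix.diagonal_apply, Matrix.vecHead, Matrix.vecTail] using h
  have e20 : Λ 0 2 * Λ 0 0 - Λ 1 2 * Λ 1 0 - Λ 2 2 * Λ 2 0 - Λ 3 2 * Λ 3 0 = 0 := by
    have h := (expand 2 0).symm.trans (key 2 0)
    simpa [minkGC, Matrix.diagonal_apply, Matrix.vecHead, Matrix.vecTail] using h
  have e21 : Λ 0 2 * Λ 0 1 - Λ 1 2 * Λ 1 1 - Λ 2 2 * Λ 2 1 - Λ 3 2 * Λ 3 1 = 0 := by
    have h := (expand 2 1).symm.trans (key 2 1)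
    simpa [minkGC, Matrix.diagonal_apply, Matrix.vecHead, Matrix.vecTail] using h
  have e22 : Λ 0 2 * Λ 0 2 - Λ 1 2 * Λ 1 2 - Λ 2 2 * Λ 2 2 - Λ 3 2 * Λ 3 2 = -1 := by
    have h := (expand 2 2).symm.trans (key 2 2)
    simpa [minkGC, Matrix.diagonal_apply, Matrix.vecHead, Matrix.vecTail] using h
  have e23 : Λ 0 2 * Λ 0 3 - Λ 1 2 * Λ 1 3 - Λ 2 2 * Λ 2 3 - Λ 3 2 * Λ 3 3 = 0 := by
    have h := (expand 2 3).symm.trans (key 2 3)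
    simpa [minkGC, Matrix.diagonal_apply, Matrix.vecHead, Matrix.vecTail] using h
  have e30 : Λ 0 3 * Λ 0 0 - Λ 1 3 * Λ 1 0 - Λ 2 3 * Λ 2 0 - Λ 3 3 * Λ 3 0 = 0 := by
    have h := (expand 3 0).symm.trans (key 3 0)
    simpa [minkGC, Matrix.diagonal_apply, Matrix.vecHead, Matrix.vecTail] using h
  have e31 : Λ 0 3 * Λ 0 1 - Λ 1 3 * Λ 1 1 - Λ 2 3 * Λ 2 1 - Λ 3 3 * Λ 3 1 = 0 := by
    have h := (expand 3 1).symm.trans (key 3 1)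
    simpa [minkGC, Matrix.diagonal_apply, Matrix.vecHead, Matrix.vecTail] using h
  have e32 : Λ 0 3 * Λ 0 2 - Λ 1 3 * Λ 1 2 - Λ 2 3 * Λ 2 2 - Λ 3 3 * Λ 3 2 = 0 := by
    have h := (expand 3 2).symm.trans (key 3 2)
    simpa [minkGC, Matrix.diagonal_apply, Matrix.vecHead, Matrix.vecTail] using h
  have e33 : Λ 0 3 * Λ 0 3 - Λ 1 3 * Λ 1 3 - Λ 2 3 * Λ 2 3 - Λ 3 3 * Λ 3 3 = -1 := by
    have h := (expand 3 3).symm.trans (key 3 3)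
    simpa [minkGC, Matrix.diagonal_apply, Matrix.vecHead, Matrix.vecTail] using h
  simp only [mdot, Fin.sum_univ_four]
  linear_combination (z 0 * z 0) * e00 + (z 0 * z 1) * e01 + (z 0 * z 2) * e02 + (z 0 * z 3) * e03 + (z 1 * z 0) * e10 + (z 1 * z 1) * e11 + (z 1 * z 2) * e12 + (z 1 * z 3) * e13 + (z 2 * z 0) * e20 + (z 2 * z 1) * e21 + (z 2 * z 2) * e22 + (z 2 * z 3) * e23 + (z 3 * z 0) * e30 + (z 3 * z 1) * e31 + (z 3 * z 2) * e32 + (z 3 * z 3) * e33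

lemma side {y : Fin 4 → ℂ} (h1 : y 1 = 0) (h2 : y 2 = 0) (h3 : (y 3).im = 0)
    (h0 : (y 0).im < 0) {c₀ : ℂ} (hmd : mdot y = c₀) :
    (y 0 + y 3) ∈ Om c₀ ∧ Zc c₀ (y 0 + y 3) = y := by
  set u := y 0 + y 3 with hu
  set v := y 0 - y 3 with hv
  have huim : u.im < 0 := by simpa [hu, Complex.add_im, h3] using h0
  have hvim : v.im < 0 := by simpa [hv, Complex.sub_im, h3] using h0
  have hune : u ≠ 0 := by intro h; rw [h] at huim; simp at huim
  have hmuv : u * v = c₀ := by rw [← hmd]; simp [mdot, hu, hv, h1, h2]; ring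
  have hdiv : c₀ / u = v := by rw [div_eq_iff hune, ← hmuv]; ring
  refine ⟨⟨huim, ?_⟩, ?_⟩
  · have hrw : c₀ * (starRingEnd ℂ) u = v * ((Complex.normSq u : ℝ) : ℂ) := by
      rw [← hmuv, ← Complex.mul_conj]; ring
    rw [hrw, Complex.mul_im]
    simp only [Complex.ofReal_re, Complex.ofReal_im, mul_zero, add_zero]
    linarith [mul_neg_of_neg_of_pos hvim (Complex.normSq_pos.mpr hune)]
  · funext i; fin_cases i
    · show (u + c₀/u)/2 = y 0
      rw [hdiv, hu, hv]; ring
    · show (0:ℂ) = y 1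
      exact h1.symm
    · show (0:ℂ) = y 2
      exact h2.symm
    · show (u - c₀/u)/2 = y 3
      rw [hdiv, hu, hv]; ring

/-- Theorem 10 of the paper, a Bargmann–Hall–Wightman-type theorem: a
function holomorphic on the forward tube and invariant under all Euclidean rotations
`SO(4)` (wherever the rotated point stays in the tube) is invariant under the proper
complex Lorentz group `L₊(ℂ)` (wherever the transformed point stays in the tube). -/
theorem euclidean_invariance_implies_complex_lorentz_invariance
    (F : (Fin 4 → ℂ) → ℂ) (hF : ∀ z ∈ ForwardTube, DifferentiableAt ℂ F z)
    (hinv : ∀ R : Matrix (Fin 4) (Fin 4) ℝ, Rᵀ * R = 1 → R.det = 1 →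
      ∀ z ∈ ForwardTube, euclRotAct R z ∈ ForwardTube → F (euclRotAct R z) = F z) :
    ∀ Λ : Matrix (Fin 4) (Fin 4) ℂ, Λᵀ * minkGC * Λ = minkGC → Λ.det = 1 →
      ∀ z ∈ ForwardTube, (fun i => ∑ j, Λ i j * z j) ∈ ForwardTube →
        F (fun i => ∑ j, Λ i j * z j) = F z := by
  intro Λ hΛ hdet z hz hΛz
  have hmd : mdot (fun i => ∑ j, Λ i j * z j) = mdot z := mdot_lorentz Λ hΛ z
  obtain ⟨z', hz1, hz2, hz3, hz0, hzmd, hzF⟩ := reduce hF hinv z hz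
  obtain ⟨w', hw1, hw2, hw3, hw0, hwmd, hwF⟩ := reduce hF hinv _ hΛz
  have hcz : mdot z' = mdot z := hzmd
  have hcw : mdot w' = mdot z := by rw [hwmd, hmd]
  obtain ⟨hmu, hZu⟩ := side hz1 hz2 hz3 hz0 hcz
  obtain ⟨hmu', hZu'⟩ := side hw1 hw2 hw3 hw0 hcw
  have hoc := omega_const hF hinv (mdot z) hmu hmu'
  rw [hZu, hZu'] at hoc
  calc F (fun i => ∑ j, Λ i j * z j) = F w' := hwF.symm
    _ = F z' := hoc
    _ = F z := hzF
end

section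
/- Let E, Z ∈ ℂ with Z ≠ 0 and Im E ≠ 0, and define g : ℝ → ℂ by g(t) := (Z/(2E)) · e^{−iEt} + (conj(Z)/(2 · conj(E))) · e^{−i·conj(E)·t}. Then g is not polynomially bounded: there exist no constants C > 0 and n ∈ ℕ such that ‖g(t)‖ ≤ C(1 + |t|)ⁿ for all t ∈ ℝ. -/
open Complex Filter

/-- For `E, Z ∈ ℂ` with `Z ≠ 0` and `Im E ≠ 0`, the function
`g(t) = (Z/(2E)) e^{−iEt} + (Z*/(2E*)) e^{−iE*t}` is not polynomially bounded on `ℝ`. -/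
theorem complex_pole_mode_not_polynomially_bounded (E Z : ℂ) (hZ : Z ≠ 0) (hE : E.im ≠ 0) :
    ¬ ∃ (C : ℝ) (n : ℕ), 0 < C ∧ ∀ t : ℝ,
      ‖Z / (2 * E) * Complex.exp (-Complex.I * E * (t : ℂ)) +
        (starRingEnd ℂ Z) / (2 * starRingEnd ℂ E) *
          Complex.exp (-Complex.I * (starRingEnd ℂ E) * (t : ℂ))‖ ≤ C * (1 + |t|) ^ n := by
  rintro ⟨C, n, hC, hbound⟩
  have hE0 : E ≠ 0 := fun h => hE (by simp [h])
  set a : ℂ := Z / (2 * E) with ha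
  have ha0 : a ≠ 0 := div_ne_zero hZ (by simp [hE0])
  set A : ℝ := ‖a‖ with hA
  have hApos : 0 < A := norm_pos_iff.mpr ha0
  set s : ℝ := |E.im| with hs
  have hspos : 0 < s := abs_pos.mpr hE
  set σ : ℝ := if 0 < E.im then 1 else -1 with hσ
  have hσs : ∀ t : ℝ, E.im * (σ * t) = s * t := by
    intro t
    by_cases h : 0 < E.im
    · simp only [hσ, if_pos h, hs, abs_of_pos h]; ring
    · have h' : E.im < 0 := lt_of_le_of_ne (not_lt.mp h) hE
      simp only [hσ, if_neg h, hs, abs_of_neg h']; ring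
  have hconj : (starRingEnd ℂ Z) / (2 * starRingEnd ℂ E) = starRingEnd ℂ a := by
    rw [ha, map_div₀, map_mul, map_ofNat]
  -- key inequality for t ≥ 0
  have key : ∀ t : ℝ, 0 ≤ t → A * Real.exp (s * t) ≤ (C + A) * (1 + t) ^ n := by
    intro t ht
    have hbt := hbound (σ * t)
    rw [hconj] at hbt
    set u := a * Complex.exp (-Complex.I * E * ((σ * t : ℝ) : ℂ)) with hu
    set v := (starRingEnd ℂ a) * Complex.exp (-Complex.I * (starRingEnd ℂ E) * ((σ * t : ℝ) : ℂ)) with hv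
    have hnu : ‖u‖ = A * Real.exp (s * t) := by
      rw [hu, norm_mul, Complex.norm_exp, ← hσs t]
      congr 2
      simp [Complex.mul_re, Complex.mul_im]
    have hnv : ‖v‖ = A * Real.exp (-(s * t)) := by
      rw [hv, norm_mul, Complex.norm_exp]
      rw [show -(s*t) = -(E.im * (σ * t)) by rw [hσs]]
      congr 1
      · simp [hA]
      · congr 1
        simp [Complex.mul_re, Complex.mul_im]
    have hlow : ‖u‖ - ‖v‖ ≤ ‖u + v‖ := by
      have := norm_sub_norm_le u (-v)
      simpa [sub_neg_eq_add] using this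
    have habs : |σ * t| = t := by
      rw [abs_mul]
      have : |σ| = 1 := by
        by_cases h : 0 < E.im <;> simp [hσ, h]
      rw [this, one_mul, _root_.abs_of_nonneg ht]
    rw [habs] at hbt
    have h1 : A * Real.exp (s * t) - A * Real.exp (-(s * t)) ≤ C * (1 + t) ^ n := by
      calc A * Real.exp (s * t) - A * Real.exp (-(s * t)) = ‖u‖ - ‖v‖ := by rw [hnu, hnv]
        _ ≤ ‖u + v‖ := hlow
        _ ≤ C * (1 + t) ^ n := hbt
    have h2 : A * Real.exp (-(s * t)) ≤ A := by
      have : Real.exp (-(s * t)) ≤ 1 := Real.exp_le_one_iff.mpr (by nlinarith)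
      nlinarith
    have h3 : (1:ℝ) ≤ (1 + t) ^ n := by
      calc (1:ℝ) = 1 ^ n := (one_pow n).symm
        _ ≤ (1 + t) ^ n := pow_le_pow_left₀ (by norm_num) (by linarith) n
    nlinarith [mul_le_mul_of_nonneg_left h3 hApos.le]
  -- exponential beats polynomial
  have htend : Tendsto (fun t : ℝ => Real.exp (s * t) / (1 + t) ^ n) atTop atTop := by
    have h1 : Tendsto (fun t : ℝ => Real.exp (s * t) / (s * t) ^ n) atTop atTop :=
      (Real.tendsto_exp_div_pow_atTop n).comp (tendsto_id.const_mul_atTop hspos)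
    have h2 : Tendsto (fun t : ℝ => (s ^ n / 2 ^ n) * (Real.exp (s * t) / (s * t) ^ n)) atTop atTop :=
      h1.const_mul_atTop (by positivity)
    refine tendsto_atTop_mono' _ ?_ h2
    filter_upwards [eventually_ge_atTop 1] with t ht
    have htpos : (0:ℝ) < t := by linarith
    have heq : (s ^ n / 2 ^ n) * (Real.exp (s * t) / (s * t) ^ n) = Real.exp (s * t) / (2 * t) ^ n := by
      rw [mul_pow, mul_pow]
      field_simp
    rw [heq]
    exact div_le_div_of_nonneg_left (Real.exp_pos _).le (by positivity)
      (pow_le_pow_left₀ (by linarith) (by linarith) n)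
  obtain ⟨t, ht1, ht2⟩ := ((htend.eventually_gt_atTop ((C + A) / A)).and (eventually_ge_atTop 0)).exists
  have hpow : (0:ℝ) < (1 + t) ^ n := by positivity
  have := key t ht2
  rw [div_lt_div_iff₀ hApos hpow] at ht1
  nlinarith
end

section
/- Let E, Z ∈ ℂ with Z ≠ 0 and Im E ≠ 0. Then there exists τ > 0 such that Re((Z/E) · e^{−Eτ}) < 0. -/
open Complex

open Real in
/-- Auxiliary: choose an integer shift making the phase target positive w.r.t. sign of b. -/
lemma aux_exists_k (θ b : ℝ) (hb : b ≠ 0) : ∃ k : ℤ, 0 < (θ + π + 2*π*k)/b := by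
  have hpi : (0:ℝ) < 2 * π := by positivity
  rcases hb.lt_or_gt with hbn | hbp
  · refine ⟨⌈(-θ - π)/(2*π)⌉ - 1, div_pos_of_neg_of_neg ?_ hbn⟩
    have h1 : ((⌈(-θ - π)/(2*π)⌉ - 1 : ℤ) : ℝ) < (-θ - π)/(2*π) := by
      push_cast
      linarith [Int.ceil_lt_add_one ((-θ - π)/(2*π))]
    have h2 := (lt_div_iff₀ hpi).mp h1
    nlinarith
  · refine ⟨⌊(-θ - π)/(2*π)⌋ + 1, div_pos ?_ hbp⟩
    have h1 : (-θ - π)/(2*π) < ((⌊(-θ - π)/(2*π)⌋ + 1 : ℤ) : ℝ) := by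
      push_cast
      linarith [Int.lt_floor_add_one ((-θ - π)/(2*π))]
    have h2 := (div_lt_iff₀ hpi).mp h1
    nlinarith

/-- For `E, Z ∈ ℂ` with `Z ≠ 0` and `Im E ≠ 0`, there is a Euclidean time
`τ > 0` with `Re((Z/E) e^{−Eτ}) < 0`: the standard necessary condition for reflection
positivity fails for a pair of complex-conjugate simple poles. -/
theorem complex_pole_schwinger_negative (E Z : ℂ) (hZ : Z ≠ 0) (hE : E.im ≠ 0) :
    ∃ τ : ℝ, 0 < τ ∧ ((Z / E) * Complex.exp (-E * (τ : ℂ))).re < 0 := by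
  have hE0 : E ≠ 0 := fun h => hE (by simp [h])
  have hW0 : Z / E ≠ 0 := div_ne_zero hZ hE0
  set b := E.im with hb
  set θ := (Z / E).arg with hθ
  obtain ⟨k, hk⟩ := aux_exists_k θ b hE
  set τ : ℝ := (θ + Real.pi + 2*Real.pi*k)/b with hτ
  refine ⟨τ, hk, ?_⟩
  have hbτ : b * τ = θ + Real.pi + 2*Real.pi*k := by
    rw [hτ]; field_simp
  have hexp : Complex.exp (-E * (τ : ℂ))
      = (Real.exp (-(E.re * τ)) : ℂ) * Complex.exp ((-(b*τ) : ℝ) * I) := by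
    rw [Complex.ofReal_exp, ← Complex.exp_add]
    congr 1
    apply Complex.ext <;> simp [hb] <;> ring
  have h2 : Complex.exp ((-(b*τ) : ℝ) * I) = -Complex.exp ((-θ : ℝ) * I) := by
    rw [hbτ]
    push_cast
    rw [show (-(↑θ + ↑Real.pi + 2*↑Real.pi*(k:ℂ)) : ℂ) * I
        = (-θ:ℝ)*I + (↑Real.pi * I + (↑(-k-1 : ℤ) * (2*↑Real.pi*I))) by push_cast; ring]
    rw [Complex.exp_add, Complex.exp_add, Complex.exp_pi_mul_I,
      Complex.exp_int_mul_two_pi_mul_I]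
    push_cast
    ring_nf
  have h3 : (Z/E) * Complex.exp ((-θ : ℝ) * I) = (‖Z/E‖ : ℂ) := by
    have habs := Complex.norm_mul_exp_arg_mul_I (Z/E)
    calc (Z/E) * Complex.exp ((-θ : ℝ) * I)
        = (‖Z/E‖ : ℂ) * (Complex.exp ((θ:ℝ) * I) * Complex.exp ((-θ : ℝ) * I)) := by
          rw [← mul_assoc, habs]
      _ = (‖Z/E‖ : ℂ) := by
          rw [← Complex.exp_add]
          push_cast
          norm_num
  have hval : (Z / E) * Complex.exp (-E * (τ : ℂ))
      = -((Real.exp (-(E.re * τ)) : ℂ) * (‖Z/E‖ : ℂ)) := by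
    rw [hexp, h2]
    rw [show (Z/E) * ((Real.exp (-(E.re * τ)) : ℂ) * -Complex.exp ((-θ : ℝ) * I))
        = -((Real.exp (-(E.re * τ)) : ℂ) * ((Z/E) * Complex.exp ((-θ : ℝ) * I))) by ring]
    rw [h3]
  rw [hval]
  have habs0 : 0 < ‖Z/E‖ := norm_pos_iff.mpr hW0
  have : (-((Real.exp (-(E.re * τ)) : ℂ) * (‖Z/E‖ : ℂ))).re
      = -(Real.exp (-(E.re * τ)) * ‖Z/E‖) := by
    rw [← Complex.ofReal_mul, ← Complex.ofReal_neg, Complex.ofReal_re]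
  rw [this]
  have := Real.exp_pos (-(E.re * τ))
  nlinarith
end

section
/- Let V be a complex vector space with a hermitian sesquilinear form B that is positive semidefinite (B(x,x) is a nonnegative real number for every x ∈ V). Let (T_τ)_{τ ≥ 0} be a family of ℂ-linear maps V → V with T_0 = id and T_{σ+τ} = T_σ ∘ T_τ for all σ, τ ≥ 0, which is B-symmetric: B(T_τ x, y) = B(x, T_τ y) for all x, y ∈ V and τ ≥ 0. Assume that for every x ∈ V there exist C > 0 and n ∈ ℕ with |B(x, T_τ x)| ≤ C(1 + τ)ⁿ for all τ ≥ 0. Then for every x ∈ V and every τ ≥ 0, B(x, T_τ x) is a real number satisfying 0 ≤ B(x, T_τ x) ≤ B(x, x). -/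
open Complex

/-- contraction estimate in Appendix B of the paper: let `B` be a positive
semidefinite hermitian sesquilinear form on a complex vector space `V` and `(T_τ)_{τ≥0}` a
`B`-symmetric semigroup of linear maps such that each `τ ↦ B(x, T_τ x)` grows at most
polynomially. Then `B(x, T_τ x)` is real and `0 ≤ B(x, T_τ x) ≤ B(x, x)`. -/
theorem semigroup_contraction_from_polynomial_growth
    {V : Type*} [AddCommGroup V] [Module ℂ V] (B : V → V → ℂ)
    (hadd₁ : ∀ x x' y : V, B (x + x') y = B x y + B x' y)
    (hsmul₁ : ∀ (c : ℂ) (x y : V), B (c • x) y = starRingEnd ℂ c * B x y)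
    (hadd₂ : ∀ x y y' : V, B x (y + y') = B x y + B x y')
    (hsmul₂ : ∀ (c : ℂ) (x y : V), B x (c • y) = c * B x y)
    (hherm : ∀ x y : V, B x y = starRingEnd ℂ (B y x))
    (hpos : ∀ x : V, 0 ≤ (B x x).re ∧ (B x x).im = 0)
    (T : ℝ → V →ₗ[ℂ] V)
    (hT0 : T 0 = LinearMap.id)
    (hTsemi : ∀ σ τ : ℝ, 0 ≤ σ → 0 ≤ τ → ∀ x : V, T (σ + τ) x = T σ (T τ x))
    (hTsymm : ∀ τ : ℝ, 0 ≤ τ → ∀ x y : V, B (T τ x) y = B x (T τ y))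
    (hTpoly : ∀ x : V, ∃ (C : ℝ) (n : ℕ), 0 < C ∧
      ∀ τ : ℝ, 0 ≤ τ → ‖B x (T τ x)‖ ≤ C * (1 + τ) ^ n) :
    ∀ x : V, ∀ τ : ℝ, 0 ≤ τ →
      (B x (T τ x)).im = 0 ∧ 0 ≤ (B x (T τ x)).re ∧ (B x (T τ x)).re ≤ (B x x).re := by
  intro x τ hτ
  set a : ℝ := (B x x).re with ha_def
  have hA : 0 ≤ a := (hpos x).1
  set f : ℝ → ℝ := fun σ => (B x (T σ x)).re with hf_def
  -- reality
  have hreal : ∀ σ : ℝ, 0 ≤ σ → (B x (T σ x)).im = 0 := by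
    intro σ hσ
    have h1 : starRingEnd ℂ (B x (T σ x)) = B x (T σ x) :=
      (hherm (T σ x) x).symm.trans (hTsymm σ hσ x x)
    have h2 := congrArg Complex.im h1.symm
    simp only [Complex.conj_im] at h2
    linarith
  -- half splitting
  have hsplit : ∀ σ : ℝ, 0 ≤ σ → B x (T σ x) = B (T (σ/2) x) (T (σ/2) x) := by
    intro σ hσ
    have e1 : T σ x = T (σ/2) (T (σ/2) x) := by
      have := hTsemi (σ/2) (σ/2) (by linarith) (by linarith) x
      rwa [show σ/2 + σ/2 = σ by ring] at this
    rw [e1, ← hTsymm (σ/2) (by linarith)]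
  -- nonnegativity
  have hfnn : ∀ σ : ℝ, 0 ≤ σ → 0 ≤ f σ := by
    intro σ hσ
    have := (hpos (T (σ/2) x)).1
    simp only [hf_def]
    rw [hsplit σ hσ]
    exact this
  -- doubling
  have hdouble : ∀ σ : ℝ, 0 ≤ σ → B (T σ x) (T σ x) = B x (T (2*σ) x) := by
    intro σ hσ
    have e1 : T (2*σ) x = T σ (T σ x) := by
      have := hTsemi σ σ hσ hσ x
      rwa [show σ + σ = 2*σ by ring] at this
    rw [e1]
    exact hTsymm σ hσ x (T σ x)
  -- Cauchy-Schwarz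
  have hCS : ∀ σ : ℝ, 0 ≤ σ → f σ ^ 2 ≤ a * f (2*σ) := by
    intro σ hσ
    set v : V := T σ x with hv
    have him : (B x v).im = 0 := hreal σ hσ
    have hvvre : (B v v).re = f (2*σ) := by
      simp only [hf_def]; rw [hdouble σ hσ]
    have hquad : ∀ t : ℝ, 0 ≤ f (2*σ) * (t * t) + (2 * f σ) * t + a := by
      intro t
      have hx := (hpos (x + (t:ℂ) • v)).1
      have hexp : B (x + (t:ℂ) • v) (x + (t:ℂ) • v)
          = B x x + (t:ℂ) * B x v + (t:ℂ) * B v x + ((t:ℂ) * (t:ℂ)) * B v v := by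
        rw [hadd₁, hadd₂, hadd₂, hsmul₂, hsmul₁, hsmul₁, hsmul₂, Complex.conj_ofReal]
        ring
      rw [hexp] at hx
      have hvx : B v x = starRingEnd ℂ (B x v) := hherm v x
      simp only [Complex.add_re, Complex.mul_re, Complex.ofReal_re, Complex.ofReal_im,
        hvx, Complex.conj_re, Complex.conj_im, Complex.mul_im] at hx
      rw [hvvre] at hx
      simp only [hf_def] at him ⊢
      nlinarith [hx, him]
    have hd := discrim_le_zero hquad
    rw [discrim] at hd
    nlinarith [hd]
  -- iteration
  have hiter : ∀ k : ℕ, f τ ^ (2^k) ≤ a ^ (2^k - 1) * f ((2:ℝ)^k * τ) := by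
    intro k
    induction k with
    | zero => simp
    | succ k ih =>
      have hm1 : 1 ≤ 2^k := Nat.one_le_two_pow
      have hfk : 0 ≤ f ((2:ℝ)^k * τ) := hfnn _ (by positivity)
      have hs1 : f τ ^ (2^(k+1)) = (f τ ^ (2^k))^2 := by
        rw [← pow_mul]; ring_nf
      have hs2 : (f τ ^ (2^k))^2 ≤ (a ^ (2^k - 1) * f ((2:ℝ)^k * τ))^2 := by
        apply pow_le_pow_left₀ (pow_nonneg (hfnn τ hτ) _) ih
      have hs3 : (a ^ (2^k - 1) * f ((2:ℝ)^k * τ))^2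
          = a ^ (2*(2^k - 1)) * (f ((2:ℝ)^k * τ))^2 := by
        rw [mul_pow, ← pow_mul]; ring_nf
      have hs4 : (f ((2:ℝ)^k * τ))^2 ≤ a * f (2 * ((2:ℝ)^k * τ)) :=
        hCS _ (by positivity)
      have hs5 : 2 * ((2:ℝ)^k * τ) = (2:ℝ)^(k+1) * τ := by ring
      have hexp : 2*(2^k - 1) + 1 = 2^(k+1) - 1 := by
        have : 1 ≤ 2^k := hm1
        omega
      calc f τ ^ (2^(k+1)) = (f τ ^ (2^k))^2 := hs1
        _ ≤ (a ^ (2^k - 1) * f ((2:ℝ)^k * τ))^2 := hs2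
        _ = a ^ (2*(2^k - 1)) * (f ((2:ℝ)^k * τ))^2 := hs3
        _ ≤ a ^ (2*(2^k - 1)) * (a * f (2 * ((2:ℝ)^k * τ))) := by
            apply mul_le_mul_of_nonneg_left hs4 (by positivity)
        _ = a ^ (2*(2^k - 1) + 1) * f ((2:ℝ)^(k+1) * τ) := by
            rw [hs5, pow_succ]; ring
        _ = a ^ (2^(k+1) - 1) * f ((2:ℝ)^(k+1) * τ) := by rw [hexp]
  refine ⟨hreal τ hτ, hfnn τ hτ, ?_⟩
  -- main contraction
  by_contra hcon
  push_neg at hcon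
  -- hcon : a < f τ
  obtain ⟨C, n, hC, hbound⟩ := hTpoly x
  have hfb : ∀ σ : ℝ, 0 ≤ σ → f σ ≤ C * (1 + σ)^n := by
    intro σ hσ
    have h1 : f σ ≤ |( B x (T σ x)).re| := le_abs_self _
    exact h1.trans ((Complex.abs_re_le_norm _).trans (hbound σ hσ))
  have ha0 : 0 < a := by
    rcases hA.lt_or_eq with h | h
    · exact h
    · exfalso
      have h2 := hCS τ hτ
      rw [← h] at h2
      have := hfnn τ hτ
      nlinarith
  set r : ℝ := f τ / a with hr_def
  have hr1 : 1 < r := (one_lt_div ha0).mpr hcon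
  have hr0 : 0 < r := by linarith
  set K : ℝ := (C / a) * (1 + τ)^n with hK_def
  have hK0 : 0 < K := by positivity
  have hkey : ∀ k : ℕ, r ^ (2^k) ≤ K * ((2:ℝ)^k)^n := by
    intro k
    have hm : (1:ℝ) ≤ (2:ℝ)^k := one_le_pow₀ (by norm_num)
    have h1 := (hiter k).trans (mul_le_mul_of_nonneg_left
      (hfb _ (by positivity)) (by positivity))
    -- h1 : f τ ^ 2^k ≤ a^(2^k-1) * (C * (1 + 2^k τ)^n)
    have hak : (0:ℝ) < a ^ (2^k - 1) := by positivity
    have hreq : r ^ (2^k) = f τ ^ (2^k) / (a ^ (2^k - 1) * a) := by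
      rw [hr_def, div_pow, ← pow_succ]
      congr 2
      have : 1 ≤ 2^k := Nat.one_le_two_pow
      omega
    rw [hreq]
    rw [div_le_iff₀ (by positivity)]
    have h2 : (1 + (2:ℝ)^k * τ)^n ≤ ((2:ℝ)^k)^n * (1+τ)^n := by
      rw [← mul_pow]
      apply pow_le_pow_left₀ (by positivity)
      nlinarith
    calc f τ ^ (2^k) ≤ a ^ (2^k - 1) * (C * (1 + (2:ℝ)^k * τ)^n) := h1
      _ ≤ a ^ (2^k - 1) * (C * (((2:ℝ)^k)^n * (1+τ)^n)) := by
          apply mul_le_mul_of_nonneg_left _ (le_of_lt hak)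
          exact mul_le_mul_of_nonneg_left h2 hC.le
      _ = K * ((2:ℝ)^k)^n * (a ^ (2^k - 1) * a) := by
          rw [hK_def]; field_simp
  -- geometric beats polynomial
  have htend : Filter.Tendsto (fun m : ℕ => K * ((m:ℝ)^n * (1/r)^m))
      Filter.atTop (nhds 0) := by
    have h0 : |1/r| < 1 := by
      rw [abs_of_pos (by positivity)]
      rw [div_lt_one hr0]; exact hr1
    have := tendsto_pow_const_mul_const_pow_of_abs_lt_one n h0
    simpa using this.const_mul K
  have hev := htend.eventually_lt_const (show (0:ℝ) < 1 by norm_num)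
  obtain ⟨N, hN⟩ := Filter.eventually_atTop.mp hev
  have hmN : N ≤ 2^N := (@Nat.lt_two_pow_self N).le
  have hfin := hN (2^N) hmN
  -- hfin : K * ((2^N : ℝ)^n * (1/r)^(2^N)) < 1
  have hrm : (0:ℝ) < r ^ (2^N) := by positivity
  have hlt : K * ((2^N : ℕ):ℝ)^n < r ^ (2^N) := by
    have h1 : K * (((2^N : ℕ):ℝ)^n * (1/r)^(2^N)) < 1 := hfin
    rw [one_div, inv_pow, ← mul_assoc, mul_inv_lt_iff₀ hrm] at h1
    simpa using h1
  have hge := hkey N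
  have hcast : ((2^N : ℕ):ℝ) = (2:ℝ)^N := by push_cast; ring
  rw [hcast] at hlt
  linarith
end

section
/- Let V be a finite-dimensional complex vector space with a hermitian sesquilinear form B that is nondegenerate (if B(w, v) = 0 for all w ∈ V then v = 0), and let H : V → V be a ℂ-linear map that is B-selfadjoint: B(Hx, y) = B(x, Hy) for all x, y ∈ V. Suppose v ∈ V, v ≠ 0, satisfies Hv = E·v with Im E ≠ 0. Then there exist w ∈ V and k ∈ ℕ such that (H − conj(E)·id)^k w = 0, B(w, v) ≠ 0, and B(w, w) = 0. -/
open Complex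

/-- Claim 2 (2) of the paper: on a finite-dimensional complex vector space
with a nondegenerate hermitian sesquilinear form `B`, every eigenvector `v ≠ 0` of a
`B`-selfadjoint operator `H` with a non-real eigenvalue `E` has a zero-norm partner `w`
which is a generalized eigenvector of `H` with eigenvalue `conj E` and `B(w, v) ≠ 0`. -/
theorem complex_eigenvalue_zero_norm_partner
    {V : Type*} [AddCommGroup V] [Module ℂ V] [FiniteDimensional ℂ V] (B : V → V → ℂ)
    (hadd₁ : ∀ x x' y : V, B (x + x') y = B x y + B x' y)
    (hsmul₁ : ∀ (c : ℂ) (x y : V), B (c • x) y = starRingEnd ℂ c * B x y)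
    (hadd₂ : ∀ x y y' : V, B x (y + y') = B x y + B x y')
    (hsmul₂ : ∀ (c : ℂ) (x y : V), B x (c • y) = c * B x y)
    (hherm : ∀ x y : V, B x y = starRingEnd ℂ (B y x))
    (hnondeg : ∀ v : V, (∀ w : V, B w v = 0) → v = 0)
    (H : V →ₗ[ℂ] V)
    (hsa : ∀ x y : V, B (H x) y = B x (H y))
    (v : V) (hv0 : v ≠ 0) (E : ℂ) (hv : H v = E • v) (hE : E.im ≠ 0) :
    ∃ (w : V) (k : ℕ),
      (((H - starRingEnd ℂ E • LinearMap.id : Module.End ℂ V) ^ k) w = 0) ∧ B w v ≠ 0 ∧ B w w = 0 := by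
  -- basic consequences
  have hzero₁ : ∀ y : V, B 0 y = 0 := by
    intro y
    have h := hadd₁ 0 0 y
    rw [add_zero] at h
    exact (right_eq_add.mp h)
  have hzero₂ : ∀ x : V, B x 0 = 0 := by
    intro x
    have h := hadd₂ x 0 0
    rw [add_zero] at h
    exact (right_eq_add.mp h)
  have hsub₁ : ∀ x x' y : V, B (x - x') y = B x y - B x' y := by
    intro x x' y
    have : x - x' = x + (-1 : ℂ) • x' := by
      rw [neg_one_smul]; abel
    rw [this, hadd₁, hsmul₁]
    simp [sub_eq_add_neg]
  have hsub₂ : ∀ x y y' : V, B x (y - y') = B x y - B x y' := by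
    intro x y y'
    have : y - y' = y + (-1 : ℂ) • y' := by
      rw [neg_one_smul]; abel
    rw [this, hadd₂, hsmul₂]
    ring
  -- the key orthogonality lemma for generalized eigenvectors
  have key : ∀ n : ℕ, ∀ (μ ν : ℂ), starRingEnd ℂ μ ≠ ν → ∀ (k j : ℕ) (x y : V),
      k + j ≤ n →
      ((H - μ • (1 : Module.End ℂ V)) ^ k) x = 0 →
      ((H - ν • (1 : Module.End ℂ V)) ^ j) y = 0 →
      B x y = 0 := by
    intro n
    induction n with
    | zero =>
      intro μ ν hμν k j x y hkj hx hy
      have hk0 : k = 0 := by omega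
      subst hk0
      simp only [pow_zero, Module.End.one_apply] at hx
      rw [hx, hzero₁]
    | succ n ih =>
      intro μ ν hμν k j x y hkj hx hy
      match k, j with
      | 0, j =>
        simp only [pow_zero, Module.End.one_apply] at hx
        rw [hx, hzero₁]
      | k, 0 =>
        simp only [pow_zero, Module.End.one_apply] at hy
        rw [hy, hzero₂]
      | (k + 1), (j + 1) =>
        set A : Module.End ℂ V := H - μ • 1 with hA
        set C : Module.End ℂ V := H - ν • 1 with hC
        have hx' : (A ^ k) (A x) = 0 := by
          rw [← Module.End.mul_apply, ← pow_succ]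
          exact hx
        have hy' : (C ^ j) (C y) = 0 := by
          rw [← Module.End.mul_apply, ← pow_succ]
          exact hy
        have h1 : B (A x) y = 0 := by
          refine ih μ ν hμν k (j + 1) (A x) y ?_ hx' hy
          omega
        have h2 : B x (C y) = 0 := by
          refine ih μ ν hμν (k + 1) j x (C y) ?_ hx hy'
          omega
        have hAx : A x = H x - μ • x := by
          simp [hA, LinearMap.sub_apply]
        have hCy : C y = H y - ν • y := by
          simp [hC, LinearMap.sub_apply]
        have e1 : B (A x) y = B x (H y) - starRingEnd ℂ μ * B x y := by
          rw [hAx, hsub₁, hsmul₁, hsa]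
        have e2 : B x (C y) = B x (H y) - ν * B x y := by
          rw [hCy, hsub₂, hsmul₂]
        have : (ν - starRingEnd ℂ μ) * B x y = 0 := by
          have := e1.symm.trans (by rw [h1]) -- B x (H y) - conj μ * B x y = 0
          have h2' := e2.symm.trans (by rw [h2])
          linear_combination this - h2'
        rcases mul_eq_zero.mp this with h | h
        · exact absurd (by linear_combination -h) hμν
        · exact h
  -- the linear functional  x ↦ B v x
  let f : V →ₗ[ℂ] ℂ :=
    { toFun := fun x => B v x
      map_add' := fun x y => hadd₂ v x y
      map_smul' := fun c x => by simp [hsmul₂] }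
  have hf : ∀ x : V, f x = B v x := fun _ => rfl
  have hfne : LinearMap.ker f ≠ ⊤ := by
    intro h
    apply hv0
    apply hnondeg
    intro w
    have : f w = 0 := by
      rw [← LinearMap.mem_ker, h]; trivial
    rw [hf] at this
    rw [hherm, this, map_zero]
  -- v is an eigenvector: (H - E•1)^1 v = 0
  have hv1 : ((H - E • (1 : Module.End ℂ V)) ^ 1) v = 0 := by
    simp [LinearMap.sub_apply, hv]
  -- find a generalized eigenspace on which f does not vanish
  have htop := Module.End.iSup_maxGenEigenspace_eq_top H
  have : ∃ (μ : ℂ) (w : V), w ∈ Module.End.maxGenEigenspace H μ ∧ f w ≠ 0 := by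
    by_contra hcon
    push_neg at hcon
    apply hfne
    rw [eq_top_iff, ← htop]
    apply iSup_le
    intro μ w hw
    exact LinearMap.mem_ker.mpr (hcon μ w hw)
  obtain ⟨μ, w, hw, hfw⟩ := this
  rw [Module.End.mem_maxGenEigenspace] at hw
  obtain ⟨k, hk⟩ := hw
  have hBwv : B w v ≠ 0 := by
    intro h
    apply hfw
    rw [hf, hherm v w, h, map_zero]
  -- μ must equal conj E
  have hμ : μ = starRingEnd ℂ E := by
    by_contra hne
    apply hBwv
    refine key (k + 1) μ E ?_ k 1 w v le_rfl hk hv1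
    intro h
    apply hne
    have := congrArg (starRingEnd ℂ) h
    rwa [Complex.conj_conj] at this
  subst hμ
  refine ⟨w, k, ?_, hBwv, ?_⟩
  · convert hk using 3
    rfl
  · refine key (k + k) (starRingEnd ℂ E) (starRingEnd ℂ E) ?_ k k w w le_rfl hk hk
    rw [Complex.conj_conj]
    intro h
    apply hE
    have := congrArg Complex.im h
    simp at this
    linarith
end

section
/- Let T be a tempered distribution on ℝ, i.e., a continuous linear functional on the Schwartz space 𝒮(ℝ; ℂ). Then there exist tempered distributions T₊ and T₋ on ℝ such that T = T₊ + T₋, T₊(f) = 0 for every f ∈ 𝒮(ℝ; ℂ) whose closed support is contained in (−∞, 0), and T₋(f) = 0 for every f ∈ 𝒮(ℝ; ℂ) whose closed support is contained in (0, ∞). -/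
open SchwartzMap

lemma aux_seminorm_right_le_add (k n : ℕ) (f g : SchwartzMap ℝ ℂ)
    (hf : tsupport ⇑f ⊆ Set.Iio 0) (hg : tsupport ⇑g ⊆ Set.Ioi 0) :
    SchwartzMap.seminorm ℂ k n g ≤ SchwartzMap.seminorm ℂ k n (f + g) := by
  refine SchwartzMap.seminorm_le_bound ℂ k n g (apply_nonneg _ _) (fun x => ?_)
  rcases le_or_gt x 0 with hx | hx
  · have hxg : x ∉ tsupport ⇑g := fun h => absurd (hg h) (by simpa using hx)
    have h0 : iteratedFDeriv ℝ n (⇑g) x = 0 := by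
      by_contra h
      exact hxg (support_iteratedFDeriv_subset n (Function.mem_support.mpr h))
    simp [h0, apply_nonneg]
  · have hxf : x ∉ tsupport ⇑f := fun h => absurd (hf h) (by simpa using hx.le)
    have hf0 : iteratedFDeriv ℝ n (⇑f) x = 0 := by
      by_contra h
      exact hxf (support_iteratedFDeriv_subset n (Function.mem_support.mpr h))
    have hsum : iteratedFDeriv ℝ n (⇑(f + g)) x = iteratedFDeriv ℝ n (⇑g) x := by
      have : ⇑(f + g) = ⇑f + ⇑g := rfl
      rw [this, iteratedFDeriv_add_apply (f.smooth n).contDiffAt (g.smooth n).contDiffAt, hf0, zero_add]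
    rw [← hsum]
    exact SchwartzMap.le_seminorm ℂ k n (f + g) x

lemma aux_eq_zero_of_tsupport_empty (f : SchwartzMap ℝ ℂ) (h : tsupport ⇑f ⊆ (∅ : Set ℝ)) :
    f = 0 := by
  ext x
  have h2 : Function.support ⇑f = ∅ :=
    Set.subset_empty_iff.mp ((subset_tsupport _).trans h)
  have : f x = 0 := by
    by_contra hx
    exact absurd (h2 ▸ Function.mem_support.mpr hx) (Set.notMem_empty x)
  simpa using this

lemma aux_tsupport_add (a b : SchwartzMap ℝ ℂ) :
    tsupport ⇑(a + b) ⊆ tsupport ⇑a ∪ tsupport ⇑b := by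
  have : ⇑(a + b) = ⇑a + ⇑b := rfl
  rw [this]; exact tsupport_add _ _

lemma aux_tsupport_zero : tsupport ⇑(0 : SchwartzMap ℝ ℂ) = ∅ := by
  have : ⇑(0 : SchwartzMap ℝ ℂ) = (fun _ => (0 : ℂ)) := rfl
  simp [tsupport, this]

lemma aux_tsupport_smul (c : ℂ) (f : SchwartzMap ℝ ℂ) :
    tsupport ⇑(c • f) ⊆ tsupport ⇑f := by
  have : ⇑(c • f) = c • ⇑f := rfl
  rw [this]
  exact closure_mono (Function.support_smul_subset_right _ _)

lemma aux_tsupport_neg (p : SchwartzMap ℝ ℂ) :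
    tsupport (fun t => -(p t)) = tsupport ⇑p := by
  unfold tsupport
  rw [Function.support_fun_neg]

set_option maxHeartbeats 1000000 in
/-- every tempered distribution on `ℝ` splits as a sum `T = T₊ + T₋` where
`T₊` vanishes on test functions supported in `(−∞,0)` and `T₋` vanishes on test functions
supported in `(0,∞)` (i.e. `T₊` is supported in `[0,∞)` and `T₋` in `(−∞,0]`). -/
theorem tempered_distribution_support_splitting (T : SchwartzMap ℝ ℂ →L[ℂ] ℂ) :
    ∃ Tp Tm : SchwartzMap ℝ ℂ →L[ℂ] ℂ, T = Tp + Tm ∧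
      (∀ f : SchwartzMap ℝ ℂ, tsupport ⇑f ⊆ Set.Iio 0 → Tp f = 0) ∧
      (∀ f : SchwartzMap ℝ ℂ, tsupport ⇑f ⊆ Set.Ioi 0 → Tm f = 0) := by
  classical
  obtain ⟨s, C, -, hC⟩ := Seminorm.bound_of_continuous (schwartz_withSeminorms ℂ ℝ ℂ)
    ((normSeminorm ℂ ℂ).comp T.toLinearMap)
    (by exact continuous_norm.comp T.continuous)
  set N : Seminorm ℂ (SchwartzMap ℝ ℂ) := C • s.sup (schwartzSeminormFamily ℂ ℝ ℂ) with hN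
  have hTN : ∀ f : SchwartzMap ℝ ℂ, ‖T f‖ ≤ N f := fun f => hC f
  have hNmono : ∀ f g : SchwartzMap ℝ ℂ, tsupport ⇑f ⊆ Set.Iio 0 → tsupport ⇑g ⊆ Set.Ioi 0 →
      N g ≤ N (f + g) := by
    intro f g hf hg
    have h1 : (s.sup (schwartzSeminormFamily ℂ ℝ ℂ)) g
        ≤ (s.sup (schwartzSeminormFamily ℂ ℝ ℂ)) (f + g) := by
      refine Seminorm.finset_sup_apply_le (apply_nonneg _ _) (fun i hi => ?_)
      calc schwartzSeminormFamily ℂ ℝ ℂ i g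
          ≤ schwartzSeminormFamily ℂ ℝ ℂ i (f + g) := aux_seminorm_right_le_add i.1 i.2 f g hf hg
        _ ≤ (s.sup (schwartzSeminormFamily ℂ ℝ ℂ)) (f + g) := Seminorm.le_finset_sup_apply hi
    simp only [hN, Seminorm.smul_apply, NNReal.smul_def, smul_eq_mul]
    exact mul_le_mul_of_nonneg_left h1 C.coe_nonneg
  set M : Submodule ℂ (SchwartzMap ℝ ℂ) :=
    { carrier := {f : SchwartzMap ℝ ℂ | tsupport ⇑f ⊆ Set.Iio 0}
      add_mem' := fun {a b} ha hb =>
        (aux_tsupport_add a b).trans (Set.union_subset ha hb)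
      zero_mem' := by
        show tsupport ⇑(0 : SchwartzMap ℝ ℂ) ⊆ Set.Iio 0
        rw [aux_tsupport_zero]; exact Set.empty_subset _
      smul_mem' := fun c f hf => (aux_tsupport_smul c f).trans hf } with hM
  set P : Submodule ℂ (SchwartzMap ℝ ℂ) :=
    { carrier := {f : SchwartzMap ℝ ℂ | tsupport ⇑f ⊆ Set.Ioi 0}
      add_mem' := fun {a b} ha hb =>
        (aux_tsupport_add a b).trans (Set.union_subset ha hb)
      zero_mem' := by
        show tsupport ⇑(0 : SchwartzMap ℝ ℂ) ⊆ Set.Ioi 0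
        rw [aux_tsupport_zero]; exact Set.empty_subset _
      smul_mem' := fun c f hf => (aux_tsupport_smul c f).trans hf } with hP
  set ψ : (M × P) →ₗ[ℂ] SchwartzMap ℝ ℂ := M.subtype.coprod P.subtype with hψ
  have hψ_apply : ∀ u : M × P, ψ u = (u.1 : SchwartzMap ℝ ℂ) + (u.2 : SchwartzMap ℝ ℂ) :=
    fun u => rfl
  have hinj : Function.Injective ψ := by
    rw [← LinearMap.ker_eq_bot, Submodule.eq_bot_iff]
    rintro ⟨m, p⟩ hmp
    have hmp' : (m : SchwartzMap ℝ ℂ) + (p : SchwartzMap ℝ ℂ) = 0 := hmp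
    have hm : (m : SchwartzMap ℝ ℂ) = -(p : SchwartzMap ℝ ℂ) :=
      eq_neg_of_add_eq_zero_left hmp'
    have hts : tsupport ⇑(m : SchwartzMap ℝ ℂ) = tsupport ⇑(p : SchwartzMap ℝ ℂ) := by
      have hc : ⇑(m : SchwartzMap ℝ ℂ) = fun t => -((p : SchwartzMap ℝ ℂ) t) := by
        rw [hm]; rfl
      rw [hc, aux_tsupport_neg]
    have hsub : tsupport ⇑(m : SchwartzMap ℝ ℂ) ⊆ (∅ : Set ℝ) := by
      intro x hxm
      have h1 : x < 0 := m.2 hxm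
      have h2 : 0 < x := p.2 (hts ▸ hxm)
      exact absurd h2 (by linarith)
    have hm0 : (m : SchwartzMap ℝ ℂ) = 0 := aux_eq_zero_of_tsupport_empty _ hsub
    have hp0 : (p : SchwartzMap ℝ ℂ) = 0 := by
      have h3 := hmp'
      rw [hm0, zero_add] at h3
      exact h3
    exact Prod.ext (Subtype.ext hm0) (Subtype.ext hp0)
  set D : Submodule ℂ (SchwartzMap ℝ ℂ) := LinearMap.range ψ with hD
  set e : (M × P) ≃ₗ[ℂ] D := LinearEquiv.ofInjective ψ hinj with he
  set φ : D →ₗ[ℂ] ℂ :=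
    T.toLinearMap ∘ₗ P.subtype ∘ₗ (LinearMap.snd ℂ M P) ∘ₗ e.symm.toLinearMap with hφdef
  have hφ_key : ∀ (m : M) (p : P) (h : (m : SchwartzMap ℝ ℂ) + (p : SchwartzMap ℝ ℂ) ∈ D),
      φ ⟨(m : SchwartzMap ℝ ℂ) + (p : SchwartzMap ℝ ℂ), h⟩ = T (p : SchwartzMap ℝ ℂ) := by
    intro m p h
    have h1 : e (m, p) = ⟨(m : SchwartzMap ℝ ℂ) + (p : SchwartzMap ℝ ℂ), h⟩ :=
      Subtype.ext (LinearEquiv.ofInjective_apply ψ (m, p))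
    have h2 : e.symm ⟨(m : SchwartzMap ℝ ℂ) + (p : SchwartzMap ℝ ℂ), h⟩ = (m, p) := by
      rw [← h1, LinearEquiv.symm_apply_apply]
    simp [hφdef, h2]
  have hφ_bound : ∀ u : D, ‖φ u‖ ≤ N (u : SchwartzMap ℝ ℂ) := by
    intro u
    obtain ⟨mp, hmp⟩ := e.surjective u
    obtain ⟨m, p⟩ := mp
    have hcoe : (u : SchwartzMap ℝ ℂ) = (m : SchwartzMap ℝ ℂ) + (p : SchwartzMap ℝ ℂ) := by
      rw [← hmp]
      exact LinearEquiv.ofInjective_apply ψ (m, p)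
    have hmem : (m : SchwartzMap ℝ ℂ) + (p : SchwartzMap ℝ ℂ) ∈ D := hcoe ▸ u.2
    have hu : u = ⟨(m : SchwartzMap ℝ ℂ) + (p : SchwartzMap ℝ ℂ), hmem⟩ := Subtype.ext hcoe
    rw [hu, hφ_key m p hmem]
    calc ‖T (p : SchwartzMap ℝ ℂ)‖ ≤ N (p : SchwartzMap ℝ ℂ) := hTN _
      _ ≤ N ((m : SchwartzMap ℝ ℂ) + (p : SchwartzMap ℝ ℂ)) := hNmono _ _ m.2 p.2
  -- the ℝ-linear "inclusion" of the restricted-scalars submodule into D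
  set ι : (D.restrictScalars ℝ) →ₗ[ℝ] D :=
    ((Submodule.restrictScalarsEquiv ℝ ℂ (SchwartzMap ℝ ℂ) D).toLinearMap).restrictScalars ℝ
    with hι
  have hι_coe : ∀ x : (D.restrictScalars ℝ), ((ι x : D) : SchwartzMap ℝ ℂ) = (x : SchwartzMap ℝ ℂ) :=
    fun x => rfl
  set φr : (D.restrictScalars ℝ) →ₗ[ℝ] ℝ :=
    Complex.reLm ∘ₗ (φ.restrictScalars ℝ) ∘ₗ ι with hφr
  set fpm : (SchwartzMap ℝ ℂ) →ₗ.[ℝ] ℝ := ⟨D.restrictScalars ℝ, φr⟩ with hfpm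
  have hNhom : ∀ c : ℝ, 0 < c → ∀ x : SchwartzMap ℝ ℂ, N (c • x) = c * N x := by
    intro c hc x
    rw [← algebraMap_smul ℂ c x, map_smul_eq_mul]
    simp [abs_of_pos hc]
  obtain ⟨g, hg_eq, hg_le⟩ := exists_extension_of_le_sublinear fpm N hNhom
    (map_add_le_add N) (by
      rintro ⟨x, hx⟩
      show (φ (ι ⟨x, hx⟩)).re ≤ N x
      calc (φ (ι ⟨x, hx⟩)).re ≤ ‖φ (ι ⟨x, hx⟩)‖ := Complex.re_le_norm _
        _ ≤ N ((ι ⟨x, hx⟩ : D) : SchwartzMap ℝ ℂ) := hφ_bound _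
        _ = N x := rfl)
  set h : SchwartzMap ℝ ℂ →ₗ[ℂ] ℂ := g.extendTo𝕜' with hh
  have hh_bound : ∀ x : SchwartzMap ℝ ℂ, ‖h x‖ ≤ N x := by
    intro x
    by_cases hx : h x = 0
    · rw [hx, norm_zero]; exact apply_nonneg N x
    · have hpos : 0 < ‖h x‖ := norm_pos_iff.mpr hx
      have hsq : ‖h x‖ ^ 2 = g ((starRingEnd ℂ) (h x) • x) :=
        g.norm_extendTo𝕜'_apply_sq x
      have hle : g ((starRingEnd ℂ) (h x) • x) ≤ N ((starRingEnd ℂ) (h x) • x) := hg_le _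
      have hNs : N ((starRingEnd ℂ) (h x) • x) = ‖h x‖ * N x := by
        rw [map_smul_eq_mul]
        simp
      have key : ‖h x‖ ^ 2 ≤ ‖h x‖ * N x := by rw [hsq, ← hNs]; exact hle
      nlinarith [key, hpos]
  have hh_eq : ∀ (u : SchwartzMap ℝ ℂ) (hu : u ∈ D), h u = φ ⟨u, hu⟩ := by
    intro u hu
    have h1 : g u = (φ ⟨u, hu⟩).re := hg_eq ⟨u, hu⟩
    have hIu : Complex.I • u ∈ D := D.smul_mem _ hu
    have h2 : g (Complex.I • u) = (φ ⟨Complex.I • u, hIu⟩).re := hg_eq ⟨_, hIu⟩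
    have h3 : φ ⟨Complex.I • u, hIu⟩ = Complex.I * φ ⟨u, hu⟩ := by
      have h5 : (⟨Complex.I • u, hIu⟩ : D) = Complex.I • (⟨u, hu⟩ : D) := rfl
      rw [h5, map_smul, smul_eq_mul]
    have h4 : h u = (g u : ℂ) - Complex.I * (g (Complex.I • u) : ℂ) := by
      have := g.extendTo𝕜'_apply (𝕜 := ℂ) u
      exact this
    rw [h4, h1, h2, h3]
    apply Complex.ext <;> simp
  have hh_cont : Continuous h := by
    refine Seminorm.cont_withSeminorms_normedSpace ℂ (schwartz_withSeminorms ℂ ℝ ℂ) h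
      ⟨s, C, fun x => hh_bound x⟩
  set Tp : SchwartzMap ℝ ℂ →L[ℂ] ℂ := ⟨h, hh_cont⟩ with hTpdef
  have hTp_apply : ∀ x, Tp x = h x := fun x => rfl
  refine ⟨Tp, T - Tp, by abel, ?_, ?_⟩
  · intro f hf
    have hmem : f ∈ D := ⟨(⟨f, hf⟩, 0), by
      rw [hψ_apply]; simp⟩
    have h1 : Tp f = φ ⟨f, hmem⟩ := hh_eq f hmem
    have hmem' : ((⟨f, hf⟩ : M) : SchwartzMap ℝ ℂ) + ((0 : P) : SchwartzMap ℝ ℂ) ∈ D := by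
      simpa using hmem
    have h6 : (⟨f, hmem⟩ : D)
        = ⟨((⟨f, hf⟩ : M) : SchwartzMap ℝ ℂ) + ((0 : P) : SchwartzMap ℝ ℂ), hmem'⟩ :=
      Subtype.ext (by simp)
    rw [h1, h6, hφ_key, Submodule.coe_zero, map_zero]
  · intro f hf
    have hmem : f ∈ D := ⟨(0, ⟨f, hf⟩), by
      rw [hψ_apply]; simp⟩
    have h1 : Tp f = φ ⟨f, hmem⟩ := hh_eq f hmem
    have hmem' : ((0 : M) : SchwartzMap ℝ ℂ) + ((⟨f, hf⟩ : P) : SchwartzMap ℝ ℂ) ∈ D := by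
      simpa using hmem
    have h6 : (⟨f, hmem⟩ : D)
        = ⟨((0 : M) : SchwartzMap ℝ ℂ) + ((⟨f, hf⟩ : P) : SchwartzMap ℝ ℂ), hmem'⟩ :=
      Subtype.ext (by simp)
    have h2 : Tp f = T f := by rw [h1, h6, hφ_key]
    simp [ContinuousLinearMap.sub_apply, h2]
end

section
/- Let z₀ ∈ ℂ, R > 0, n ≥ 1, and let f : ℂ → ℂ have a pole of order at most n at z₀, in the sense that there is a function g holomorphic on the open ball B(z₀, R) with f(ζ) = g(ζ)/(ζ − z₀)^n for all ζ ∈ B(z₀, R) ∖ {z₀}. Let 0 < r < R and let w ∈ ℂ with |w − z₀| > r. Then (1/(2πi)) ∮_{|ζ−z₀|=r} f(ζ)/(ζ − w) dζ = − Σ_{m=1}^{n} Z_m/(w − z₀)^m, where Z_m := (1/(2πi)) ∮_{|ζ−z₀|=r} f(ζ)(ζ − z₀)^{m−1} dζ and both circle integrals are taken counterclockwise. -/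
open Complex

private lemma circleIntegral_finset_sum {ι : Type*} (s : Finset ι) (F : ι → ℂ → ℂ)
    (c : ℂ) (R : ℝ) (h : ∀ i ∈ s, CircleIntegrable (F i) c R) :
    (∮ z in C(c, R), ∑ i ∈ s, F i z) = ∑ i ∈ s, ∮ z in C(c, R), F i z := by
  simp only [circleIntegral, Finset.smul_sum]
  exact intervalIntegral.integral_finset_sum fun i hi => (h i hi).out

private lemma circleIntegral_add' {f g : ℂ → ℂ} {c : ℂ} {R : ℝ}
    (hf : CircleIntegrable f c R) (hg : CircleIntegrable g c R) :
    (∮ z in C(c, R), (f z + g z)) = (∮ z in C(c, R), f z) + ∮ z in C(c, R), g z := by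
  simp only [circleIntegral, smul_add, intervalIntegral.integral_add hf.out hg.out]

private lemma geom_aux (a b : ℂ) (hb : b ≠ 0) (hba : b ≠ a) (n : ℕ) :
    ∑ m ∈ Finset.Icc 1 n, a ^ (m - 1) / b ^ m = (1 - (a / b) ^ n) / (b - a) := by
  induction n with
  | zero => simp
  | succ n ih =>
    rw [← Finset.Ico_add_one_right_eq_Icc, Finset.sum_Ico_succ_top (by omega), Finset.Ico_add_one_right_eq_Icc, ih]
    have hba' : b - a ≠ 0 := sub_ne_zero.2 hba
    simp only [div_pow, Nat.add_sub_cancel]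
    field_simp
    ring

/-- complex-pole contribution in Theorem 1 of the paper: if `f` has a pole
of order at most `n` at `z₀` (i.e. `f = g/(·−z₀)ⁿ` with `g` holomorphic on `B(z₀,R)`),
`0 < r < R` and `|w − z₀| > r`, then
`(1/(2πi)) ∮_{|ζ−z₀|=r} f(ζ)/(ζ−w) dζ = −Σ_{m=1}^n Z_m/(w−z₀)^m` with
`Z_m = (1/(2πi)) ∮_{|ζ−z₀|=r} f(ζ)(ζ−z₀)^{m−1} dζ`. -/
theorem pole_contribution_spectral_representation (z₀ : ℂ) (R : ℝ) (hR : 0 < R)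
    (n : ℕ) (hn : 1 ≤ n) (f g : ℂ → ℂ)
    (hg : DifferentiableOn ℂ g (Metric.ball z₀ R))
    (hf : ∀ ζ ∈ Metric.ball z₀ R \ {z₀}, f ζ = g ζ / (ζ - z₀) ^ n)
    (r : ℝ) (hr0 : 0 < r) (hrR : r < R) (w : ℂ) (hw : r < ‖w - z₀‖) :
    (2 * Real.pi * Complex.I)⁻¹ * (∮ ζ in C(z₀, r), f ζ / (ζ - w)) =
      -∑ m ∈ Finset.Icc 1 n,
        ((2 * Real.pi * Complex.I)⁻¹ * ∮ ζ in C(z₀, r), f ζ * (ζ - z₀) ^ (m - 1)) /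
          (w - z₀) ^ m := by
  have hb0 : (w - z₀) ≠ 0 := by
    intro h
    rw [h] at hw; simp at hw; linarith
  have hw' : r < ‖z₀ - w‖ := by rwa [norm_sub_rev] at hw
  have hsph : ∀ ζ ∈ Metric.sphere z₀ r, (ζ ∈ Metric.ball z₀ R \ {z₀}) ∧ ζ ≠ w := by
    intro ζ hζ
    rw [Metric.mem_sphere, dist_eq] at hζ
    refine ⟨⟨Metric.mem_ball.2 (by rw [dist_eq, hζ]; exact hrR), ?_⟩, ?_⟩
    · simp only [Set.mem_singleton_iff]
      intro h; rw [h] at hζ; simp at hζ; linarith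
    · intro h
      rw [h, norm_sub_rev] at hζ
      linarith [hw']
  have hne : ∀ ζ ∈ Metric.sphere z₀ r, ζ - z₀ ≠ 0 := by
    intro ζ hζ h
    have := (hsph ζ hζ).1.2
    exact this (Set.mem_singleton_iff.2 (sub_eq_zero.1 h))
  have hfc : ContinuousOn f (Metric.sphere z₀ r) := by
    have : ContinuousOn (fun ζ => g ζ / (ζ - z₀) ^ n) (Metric.sphere z₀ r) := by
      apply ContinuousOn.div
      · exact hg.continuousOn.mono fun ζ hζ => (hsph ζ hζ).1.1
      · exact (continuousOn_id.sub continuousOn_const).pow n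
      · exact fun ζ hζ => pow_ne_zero _ (hne ζ hζ)
    exact this.congr fun ζ hζ => hf ζ (hsph ζ hζ).1
  have hzero : (∮ ζ in C(z₀, r), g ζ / (ζ - w)) = 0 := by
    apply circleIntegral_eq_zero_of_differentiable_on_off_countable hr0.le
      Set.countable_empty
    · apply ContinuousOn.div
      · exact hg.continuousOn.mono fun ζ hζ =>
          Metric.mem_ball.2 (lt_of_le_of_lt (Metric.mem_closedBall.1 hζ) hrR)
      · exact continuousOn_id.sub continuousOn_const
      · intro ζ hζ
        rw [Metric.mem_closedBall, dist_eq] at hζ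
        refine sub_ne_zero.2 fun h => ?_
        rw [h, norm_sub_rev] at hζ
        linarith [hw']
    · rintro ζ ⟨hζb, -⟩
      rw [Metric.mem_ball, dist_eq] at hζb
      have h1 : DifferentiableAt ℂ g ζ :=
        hg.differentiableAt (Metric.isOpen_ball.mem_nhds
          (Metric.mem_ball.2 (by rw [dist_eq]; exact hζb.trans hrR)))
      have h2 : ζ - w ≠ 0 := by
        intro h
        rw [sub_eq_zero] at h
        rw [h, norm_sub_rev] at hζb
        linarith [hw']
      exact h1.div (differentiableAt_id.sub_const _) h2
  set F : ℕ → ℂ → ℂ := fun m ζ => -((w - z₀) ^ m)⁻¹ * (f ζ * (ζ - z₀) ^ (m - 1)) with hF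
  have hint1 : ∀ m ∈ Finset.Icc 1 n, CircleIntegrable (F m) z₀ r := fun m _ =>
    ContinuousOn.circleIntegrable hr0.le
      (continuousOn_const.mul (hfc.mul ((continuousOn_id.sub continuousOn_const).pow _)))
  have hint1' : CircleIntegrable (fun ζ => ∑ m ∈ Finset.Icc 1 n, F m ζ) z₀ r :=
    ContinuousOn.circleIntegrable hr0.le (continuousOn_finset_sum _ fun m hm =>
      continuousOn_const.mul (hfc.mul ((continuousOn_id.sub continuousOn_const).pow _)))
  have hint2 : CircleIntegrable (fun ζ => ((w - z₀) ^ n)⁻¹ * (g ζ / (ζ - w))) z₀ r := by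
    apply ContinuousOn.circleIntegrable hr0.le
    apply ContinuousOn.mul continuousOn_const
    apply ContinuousOn.div
    · exact hg.continuousOn.mono fun ζ hζ => (hsph ζ hζ).1.1
    · exact continuousOn_id.sub continuousOn_const
    · exact fun ζ hζ => sub_ne_zero.2 (hsph ζ hζ).2
  have hdecomp : Set.EqOn (fun ζ => f ζ / (ζ - w))
      (fun ζ => (∑ m ∈ Finset.Icc 1 n, F m ζ)
        + ((w - z₀) ^ n)⁻¹ * (g ζ / (ζ - w))) (Metric.sphere z₀ r) := by
    intro ζ hζ
    obtain ⟨⟨hζB, hζz⟩, hζw⟩ := hsph ζ hζ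
    have ha0 : ζ - z₀ ≠ 0 := hne ζ hζ
    have hζw' : ζ - w ≠ 0 := sub_ne_zero.2 hζw
    have hba : w - z₀ ≠ ζ - z₀ := fun h => hζw (by linear_combination -h)
    have hfζ : f ζ = g ζ / (ζ - z₀) ^ n := hf ζ ⟨hζB, hζz⟩
    simp only [hF]
    have hsum : ∑ m ∈ Finset.Icc 1 n, -((w - z₀) ^ m)⁻¹ * (f ζ * (ζ - z₀) ^ (m - 1))
        = -(f ζ * ((1 - ((ζ - z₀) / (w - z₀)) ^ n) / ((w - z₀) - (ζ - z₀)))) := by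
      rw [← geom_aux (ζ - z₀) (w - z₀) hb0 hba n, Finset.mul_sum, ← Finset.sum_neg_distrib]
      exact Finset.sum_congr rfl fun m _ => by ring
    rw [hsum, hfζ, show w - z₀ - (ζ - z₀) = -(ζ - w) from by ring, div_neg, div_pow]
    have han : (ζ - z₀) ^ n ≠ 0 := pow_ne_zero _ ha0
    linear_combination (g ζ * ((ζ - w))⁻¹ * ((w - z₀) ^ n)⁻¹) * mul_inv_cancel₀ han
  rw [circleIntegral.integral_congr hr0.le hdecomp, circleIntegral_add' hint1' hint2,
    circleIntegral_finset_sum _ _ _ _ hint1]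
  have hI : ∀ m, (∮ ζ in C(z₀, r), F m ζ)
      = -((w - z₀) ^ m)⁻¹ * ∮ ζ in C(z₀, r), f ζ * (ζ - z₀) ^ (m - 1) := fun m =>
    circleIntegral.integral_const_mul _ _ _ _
  have hI2 : (∮ ζ in C(z₀, r), ((w - z₀) ^ n)⁻¹ * (g ζ / (ζ - w))) = 0 := by
    rw [circleIntegral.integral_const_mul, hzero, mul_zero]
  simp only [hI, hI2, add_zero, Finset.mul_sum, ← Finset.sum_neg_distrib]
  exact Finset.sum_congr rfl fun m _ => by ring
end
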